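/- arXiv:1309.7645 — 4 statements merged into one kernel-verified Lean document; each statement's English description precedes it below -/
import Mathlib

section
/- In the seminal-curve recursion, for every n ≥ 0 one has E[3^n · Y_n³/S_n] ≤ (3/10)^n · E[Y_0³] + (12/7)·E[Y_0]; in particular, since Γ has a Rayleigh(√2) distribution and hence E[Y_0³] and E[Y_0] are finite, there is a finite constant C (one may take C = E[Y_0³] + (12/7)·E[Y_0]) such that E[Y_n³/S_n] ≤ C · 3^{−n} for all n ≥ 0. -/
open MeasureTheory ProbabilityTheory Filter

section AuxLemmas

open Real Set intervalIntegral

lemma semaux_int_lin : ∫ x in Set.Icc (0:ℝ) 1, (1 - Real.sqrt x) = 1/3 := by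
  rw [integral_Icc_eq_integral_Ioc, ← intervalIntegral.integral_of_le zero_le_one]
  have h : ∀ x ∈ Set.uIcc (0:ℝ) 1, (1 - Real.sqrt x) = 1 - x ^ ((1:ℝ)/2) := by
    intro x hx
    rw [Real.sqrt_eq_rpow]
  rw [intervalIntegral.integral_congr h]
  rw [intervalIntegral.integral_sub intervalIntegrable_const
    (intervalIntegrable_rpow' (by norm_num))]
  rw [integral_rpow (Or.inl (by norm_num))]
  norm_num

lemma semaux_int_cube : ∫ x in Set.Icc (0:ℝ) 1, (1 - Real.sqrt x)^3 = 1/10 := by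
  rw [integral_Icc_eq_integral_Ioc, ← intervalIntegral.integral_of_le zero_le_one]
  have h : ∀ x ∈ Set.uIcc (0:ℝ) 1, (1 - Real.sqrt x)^3
      = 1 - 3 * x ^ ((1:ℝ)/2) + 3 * x - x ^ ((3:ℝ)/2) := by
    intro x hx
    rw [Set.uIcc_of_le zero_le_one] at hx
    have hx0 : (0:ℝ) ≤ x := hx.1
    have h1 : Real.sqrt x = x ^ ((1:ℝ)/2) := Real.sqrt_eq_rpow x
    have h2 : (x ^ ((1:ℝ)/2)) ^ (2:ℕ) = x := by
      rw [← Real.rpow_natCast (x ^ ((1:ℝ)/2)) 2, ← Real.rpow_mul hx0]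
      norm_num
    have h3 : (x ^ ((1:ℝ)/2)) ^ (3:ℕ) = x ^ ((3:ℝ)/2) := by
      rw [← Real.rpow_natCast (x ^ ((1:ℝ)/2)) 3, ← Real.rpow_mul hx0]
      norm_num
    ring_nf
    rw [h1] at *
    nlinarith [h2, h3]
  rw [intervalIntegral.integral_congr h]
  have i1 : IntervalIntegrable (fun x : ℝ => 3 * x ^ ((1:ℝ)/2)) volume 0 1 :=
    (intervalIntegrable_rpow' (by norm_num)).const_mul 3
  have i2 : IntervalIntegrable (fun x : ℝ => x ^ ((3:ℝ)/2)) volume 0 1 :=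
    intervalIntegrable_rpow' (by norm_num)
  have i3 : IntervalIntegrable (fun x : ℝ => (3:ℝ) * x) volume 0 1 :=
    (intervalIntegral.intervalIntegrable_id).const_mul 3
  rw [intervalIntegral.integral_sub ((intervalIntegrable_const.sub i1).add i3) i2,
    intervalIntegral.integral_add (intervalIntegrable_const.sub i1) i3,
    intervalIntegral.integral_sub intervalIntegrable_const i1,
    intervalIntegral.integral_const_mul, intervalIntegral.integral_const_mul,
    integral_rpow (Or.inl (by norm_num)), integral_rpow (Or.inl (by norm_num)),
    integral_id]
  norm_num

lemma semaux_expMeasure_neg : (expMeasure 1) (Set.Iio 0) = 0 := by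
  rw [expMeasure, gammaMeasure, withDensity_apply _ measurableSet_Iio]
  exact lintegral_exponentialPDF_of_nonpos le_rfl

lemma semaux_exp_abs : ∫⁻ x, ENNReal.ofReal |x| ∂(expMeasure 1) = 1 := by
  have hpdf : Measurable (gammaPDF 1 1) :=
    (measurable_gammaPDFReal 1 1).ennreal_ofReal
  have hm : Measurable (fun x : ℝ => ENNReal.ofReal |x|) :=
    measurable_abs.ennreal_ofReal
  rw [expMeasure, gammaMeasure, lintegral_withDensity_eq_lintegral_mul _ hpdf hm]
  have key : ∀ x : ℝ, (gammaPDF 1 1 * fun x => ENNReal.ofReal |x|) x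
      = ENNReal.ofReal (Set.indicator (Set.Ici (0:ℝ)) (fun x => Real.exp (-x) * x) x) := by
    intro x
    simp only [Pi.mul_apply]
    have : gammaPDF 1 1 x = exponentialPDF 1 x := rfl
    rw [this, exponentialPDF_eq]
    by_cases hx : 0 ≤ x
    · rw [if_pos hx, Set.indicator_of_mem (Set.mem_Ici.mpr hx),
        ← ENNReal.ofReal_mul (by positivity), abs_of_nonneg hx]
      norm_num
    · rw [if_neg hx, Set.indicator_of_notMem (by simpa using hx)]
      simp
  simp only [key]
  have hint : Integrable (Set.indicator (Set.Ici (0:ℝ)) (fun x => Real.exp (-x) * x)) := by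
    rw [integrable_indicator_iff measurableSet_Ici]
    rw [IntegrableOn, Measure.restrict_congr_set Ioi_ae_eq_Ici.symm, ← IntegrableOn]
    have h := Real.GammaIntegral_convergent (by norm_num : (0:ℝ) < 2)
    rw [show ((2:ℝ) - 1) = 1 by norm_num] at h
    simpa [Real.rpow_one] using h
  rw [← ofReal_integral_eq_lintegral_ofReal hint]
  · rw [MeasureTheory.integral_indicator measurableSet_Ici, integral_Ici_eq_integral_Ioi]
    have h2 := Real.Gamma_eq_integral (by norm_num : (0:ℝ) < 2)
    have h3 : Real.Gamma 2 = 1 := by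
      have := Real.Gamma_add_one (by norm_num : (1:ℝ) ≠ 0)
      simpa [Real.Gamma_one] using this
    rw [show ((2:ℝ) - 1) = 1 by norm_num] at h2
    simp only [Real.rpow_one] at h2
    rw [← h2, h3, ENNReal.ofReal_one]
  · refine Filter.Eventually.of_forall fun x => ?_
    by_cases hx : (0:ℝ) ≤ x
    · rw [Set.indicator_of_mem (Set.mem_Ici.mpr hx)]; positivity
    · rw [Set.indicator_of_notMem (by simpa using hx)]; exact le_rfl

lemma semaux_exp_ae_nonneg : 0 ≤ᵐ[expMeasure 1] (fun x : ℝ => x) := by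
  rw [Filter.EventuallyLE, ae_iff]
  have : {x : ℝ | ¬ (0:ℝ) ≤ x} = Set.Iio 0 := by ext x; simp [not_le]
  simp only [Pi.zero_apply]
  rw [this]
  exact semaux_expMeasure_neg

lemma semaux_exp_ofReal : ∫⁻ x, ENNReal.ofReal x ∂(expMeasure 1) = 1 := by
  rw [← semaux_exp_abs]
  refine lintegral_congr_ae ?_
  filter_upwards [semaux_exp_ae_nonneg] with x hx
  rw [abs_of_nonneg hx]

lemma semaux_exp_fin : HasFiniteIntegral (fun x : ℝ => x) (expMeasure 1) := by
  rw [hasFiniteIntegral_iff_ofReal semaux_exp_ae_nonneg, semaux_exp_ofReal]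
  exact ENNReal.one_lt_top

lemma semaux_exp_mean : ∫ x, x ∂(expMeasure 1) = 1 := by
  rw [integral_eq_lintegral_of_nonneg_ae semaux_exp_ae_nonneg aestronglyMeasurable_id,
    semaux_exp_ofReal, ENNReal.toReal_one]

end AuxLemmas
section Main

/-- The σ-algebra `F n` generated by `Γ`, `V`, and `U_1, …, U_n`, `E_1, …, E_n`.
(Here the random variables `U i`, `E i` of the Lean formalization, for `i < n`,
represent the mathematical `U_{i+1}`, `E_{i+1}`: the indexing is shifted by one.) -/
def seminalFiltration {Ω : Type*} [MeasurableSpace Ω] (U E : ℕ → Ω → ℝ) (Γ V : Ω → ℝ)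
    (n : ℕ) : MeasurableSpace Ω :=
  MeasurableSpace.comap Γ inferInstance ⊔ MeasurableSpace.comap V inferInstance ⊔
    ⨆ i < n, (MeasurableSpace.comap (U i) inferInstance ⊔
      MeasurableSpace.comap (E i) inferInstance)

theorem seminal_curve_cube_moment_bound
    {Ω : Type*} [MeasurableSpace Ω] (μ : Measure Ω) [IsProbabilityMeasure μ]
    -- the driving random variables: `U n`, `E n` represent the mathematical
    -- `U_{n+1}`, `E_{n+1}` (indexing shifted by one)
    (U E : ℕ → Ω → ℝ) (Γ V : Ω → ℝ) (Y S G : ℕ → Ω → ℝ)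
    (hUm : ∀ n, Measurable (U n)) (hEm : ∀ n, Measurable (E n))
    (hΓm : Measurable Γ) (hVm : Measurable V)
    -- each `U n` and `V` is uniformly distributed on `[0,1]`
    (hU : ∀ n, μ.map (U n) = volume.restrict (Set.Icc (0:ℝ) 1))
    (hV : μ.map V = volume.restrict (Set.Icc (0:ℝ) 1))
    -- each `E n` has the standard exponential distribution (rate 1)
    (hE : ∀ n, μ.map (E n) = expMeasure 1)
    -- `Γ` has the Rayleigh(√2) distribution: `P(Γ > γ) = exp (-γ²/4)` for `γ ≥ 0`
    (hΓ : ∀ γ : ℝ, 0 ≤ γ → μ {ω | Γ ω > γ} = ENNReal.ofReal (Real.exp (-(γ ^ 2) / 4)))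
    -- `(U n)`, `(E n)`, `Γ`, `V` are mutually independent
    (hindep : iIndepFun
      (Sum.elim U (Sum.elim E (fun b : Bool => bif b then Γ else V))) μ)
    -- initial conditions `S 0 = 1`, `Y 0 = (1 - V)·Γ`, `G 0 = V·Γ`
    (hS0 : ∀ ω, S 0 ω = 1)
    (hY0 : ∀ ω, Y 0 ω = (1 - V ω) * Γ ω)
    (hG0 : ∀ ω, G 0 ω = V ω * Γ ω)
    -- the seminal-curve recursion
    (hYrec : ∀ n ω, Y (n + 1) ω = Y n ω * (1 - Real.sqrt (U n ω)))
    (hSrec : ∀ n ω, 1 / S (n + 1) ω = 1 / S n ω + 4 / (Y n ω) ^ 2 * E n ω)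
    (hGrec : ∀ n ω, G (n + 1) ω = G n ω + Y n ω / S (n + 1) ω * Real.sqrt (U n ω))
    :
    (∀ n : ℕ,
      ∫ ω, (3:ℝ) ^ n * (Y n ω) ^ 3 / S n ω ∂μ
        ≤ ((3:ℝ) / 10) ^ n * ∫ ω, (Y 0 ω) ^ 3 ∂μ + 12 / 7 * ∫ ω, Y 0 ω ∂μ)
    ∧ (∀ n : ℕ,
      ∫ ω, (Y n ω) ^ 3 / S n ω ∂μ
        ≤ (∫ ω, (Y 0 ω) ^ 3 ∂μ + 12 / 7 * ∫ ω, Y 0 ω ∂μ) * (3:ℝ) ^ (-(n:ℤ))) := by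
  classical
  set ι := (ℕ ⊕ (ℕ ⊕ Bool)) with hι
  let X : ι → Ω → ℝ := Sum.elim U (Sum.elim E (fun b : Bool => bif b then Γ else V))
  have hXm : ∀ i, Measurable (X i) := by
    rintro (n | n | b)
    · exact hUm n
    · exact hEm n
    · cases b
      · exact hVm
      · exact hΓm
  have hindep' : iIndep (fun j : ι => MeasurableSpace.comap (X j) inferInstance) μ :=
    hindep.iIndep
  set M : Set ι → MeasurableSpace Ω :=
    fun s => ⨆ j ∈ s, MeasurableSpace.comap (X j) inferInstance with hM
  have hM_le : ∀ s, M s ≤ ‹MeasurableSpace Ω› := fun s =>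
    iSup₂_le fun j _ => (hXm j).comap_le
  have hMmono : ∀ {s t : Set ι}, s ⊆ t → M s ≤ M t := fun hst =>
    biSup_mono hst
  have hXmem : ∀ {s : Set ι} (j), j ∈ s → Measurable[M s] (X j) := by
    intro s j hj
    rw [measurable_iff_comap_le]
    exact le_iSup₂ (f := fun j (_ : j ∈ s) => MeasurableSpace.comap (X j) inferInstance) j hj
  -- the key independence principle
  have key : ∀ (i : ι) (s : Set ι), i ∉ s → ∀ (g : Ω → ℝ), Measurable[M s] g →
      ∀ (φ : ℝ → ℝ), Measurable φ → IndepFun (fun ω => φ (X i ω)) g μ := by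
    intro i s his g hg φ hφ
    have h1 : Indep (⨆ j ∈ ({i} : Set ι), MeasurableSpace.comap (X j) inferInstance) (M s) μ :=
      indep_iSup_of_disjoint (fun j => (hXm j).comap_le) hindep'
        (Set.disjoint_singleton_left.mpr his)
    rw [iSup_singleton] at h1
    rw [IndepFun_iff_Indep]
    refine indep_of_indep_of_le_left (indep_of_indep_of_le_right h1 hg.comap_le) ?_
    have : (fun ω => φ (X i ω)) = φ ∘ (X i) := rfl
    rw [this, ← MeasurableSpace.comap_comp]
    exact MeasurableSpace.comap_mono hφ.comap_le
  -- index sets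
  set K : ℕ → ℕ → Set ι :=
    fun a b => Sum.inl '' (Set.Iio a) ∪ (Sum.inr ∘ Sum.inl) '' (Set.Iio b) ∪
      Set.range (fun bo : Bool => (Sum.inr (Sum.inr bo) : ι)) with hK
  have hKmono : ∀ {a b a' b' : ℕ}, a ≤ a' → b ≤ b' → K a b ⊆ K a' b' := by
    intro a b a' b' ha hb
    refine Set.union_subset_union (Set.union_subset_union ?_ ?_) subset_rfl
    · exact Set.image_mono (Set.Iio_subset_Iio ha)
    · exact Set.image_mono (Set.Iio_subset_Iio hb)
  have hmemU : ∀ {a b k : ℕ}, k < a → (Sum.inl k : ι) ∈ K a b :=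
    fun h => Or.inl (Or.inl ⟨_, h, rfl⟩)
  have hmemE : ∀ {a b k : ℕ}, k < b → (Sum.inr (Sum.inl k) : ι) ∈ K a b :=
    fun h => Or.inl (Or.inr ⟨_, h, rfl⟩)
  have hmemB : ∀ {a b : ℕ} (bo : Bool), (Sum.inr (Sum.inr bo) : ι) ∈ K a b :=
    fun bo => Or.inr ⟨bo, rfl⟩
  have hnotinU : ∀ {n b : ℕ}, (Sum.inl n : ι) ∉ K n b := by
    rintro n b ((⟨k, hk, hkeq⟩ | ⟨k, hk, hkeq⟩) | ⟨bo, hkeq⟩)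
    · rw [Set.mem_Iio] at hk
      cases Sum.inl_injective hkeq
      exact Nat.lt_irrefl _ hk
    · simp at hkeq
    · simp at hkeq
  have hnotinE : ∀ {n a : ℕ}, (Sum.inr (Sum.inl n) : ι) ∉ K a 0 := by
    rintro n a ((⟨k, hk, hkeq⟩ | ⟨k, hk, hkeq⟩) | ⟨bo, hkeq⟩)
    · simp at hkeq
    · rw [Set.mem_Iio] at hk
      exact Nat.not_lt_zero _ hk
    · cases hkeq
  -- measurability of Y and S with respect to the partial σ-algebras
  have hsqrtm : Measurable Real.sqrt := Real.continuous_sqrt.measurable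
  have hYmeas : ∀ n, Measurable[M (K n 0)] (Y n) := by
    intro n
    induction n with
    | zero =>
      have hfe : Y 0 = fun ω => (1 - X (Sum.inr (Sum.inr false)) ω) * X (Sum.inr (Sum.inr true)) ω :=
        funext hY0
      rw [hfe]
      exact (measurable_const.sub (hXmem _ (hmemB false))).mul (hXmem _ (hmemB true))
    | succ n ih =>
      have h1 : Measurable[M (K (n+1) 0)] (Y n) := ih.mono (hMmono (hKmono n.le_succ le_rfl)) le_rfl
      have h2 : Measurable[M (K (n+1) 0)] (U n) := hXmem (Sum.inl n) (hmemU n.lt_succ_self)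
      have hfe : Y (n+1) = fun ω => Y n ω * (1 - Real.sqrt (U n ω)) := funext (hYrec n)
      rw [hfe]
      exact h1.mul (measurable_const.sub (hsqrtm.comp h2))
  have hSalt : ∀ n ω, S (n+1) ω = (1 / S n ω + 4 / (Y n ω) ^ 2 * E n ω)⁻¹ := by
    intro n ω
    rw [← hSrec n ω, one_div, inv_inv]
  have hSmeas : ∀ n, Measurable[M (K n n)] (S n) := by
    intro n
    induction n with
    | zero =>
      have hfe : S 0 = fun _ => (1:ℝ) := funext hS0
      rw [hfe]
      exact measurable_const
    | succ n ih =>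
      have h1 : Measurable[M (K (n+1) (n+1))] (S n) :=
        ih.mono (hMmono (hKmono n.le_succ n.le_succ)) le_rfl
      have hY' : Measurable[M (K (n+1) (n+1))] (Y n) :=
        (hYmeas n).mono (hMmono (hKmono n.le_succ (Nat.zero_le _))) le_rfl
      have hE' : Measurable[M (K (n+1) (n+1))] (E n) :=
        hXmem (Sum.inr (Sum.inl n)) (hmemE n.lt_succ_self)
      have hfe : S (n+1) = fun ω => (1 / S n ω + 4 / (Y n ω) ^ 2 * E n ω)⁻¹ :=
        funext (hSalt n)
      rw [hfe]
      exact ((((measurable_const (α := ℝ)).div h1).add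
        (((measurable_const (α := ℝ)).div (hY'.pow_const 2)).mul hE')).inv)
  have hYM : ∀ n, Measurable (Y n) := fun n => (hYmeas n).mono (hM_le _) le_rfl
  have hSM : ∀ n, Measurable (S n) := fun n => (hSmeas n).mono (hM_le _) le_rfl
  -- a.e. facts
  have hU01 : ∀ n, ∀ᵐ ω ∂μ, U n ω ∈ Set.Icc (0:ℝ) 1 := by
    intro n
    have h1 : ∀ᵐ x ∂(μ.map (U n)), x ∈ Set.Icc (0:ℝ) 1 := by
      rw [hU n]; exact ae_restrict_mem measurableSet_Icc
    exact (ae_map_iff (hUm n).aemeasurable measurableSet_Icc).mp h1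
  have hV01 : ∀ᵐ ω ∂μ, V ω ∈ Set.Icc (0:ℝ) 1 := by
    have h1 : ∀ᵐ x ∂(μ.map V), x ∈ Set.Icc (0:ℝ) 1 := by
      rw [hV]; exact ae_restrict_mem measurableSet_Icc
    exact (ae_map_iff hVm.aemeasurable measurableSet_Icc).mp h1
  have hE0 : ∀ n, ∀ᵐ ω ∂μ, 0 ≤ E n ω := by
    intro n
    rw [ae_iff]
    have hset : {ω | ¬ (0:ℝ) ≤ E n ω} = (E n) ⁻¹' (Set.Iio 0) := by
      ext ω; simp [not_le]
    rw [hset, ← Measure.map_apply (hEm n) measurableSet_Iio, hE n, semaux_expMeasure_neg]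
  have hΓ0 : ∀ᵐ ω ∂μ, 0 ≤ Γ ω := by
    have h1 : μ {ω | Γ ω > 0} = 1 := by
      rw [hΓ 0 le_rfl]; norm_num
    rw [ae_iff]
    refine measure_mono_null
      (fun ω (hω : ¬ (0:ℝ) ≤ Γ ω) =>
        (show ω ∈ {ω | Γ ω > 0}ᶜ from fun h => hω (le_of_lt h))) ?_
    have hms : MeasurableSet {ω | Γ ω > 0} := hΓm measurableSet_Ioi
    rw [measure_compl hms (measure_ne_top μ _), h1, measure_univ]
    simp
  have hYbound : ∀ᵐ ω ∂μ, ∀ n, 0 ≤ Y n ω ∧ Y n ω ≤ Γ ω := by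
    filter_upwards [ae_all_iff.mpr hU01, hV01, hΓ0] with ω hu hv hγ
    intro n
    induction n with
    | zero =>
      rw [hY0]
      refine ⟨mul_nonneg (by linarith [hv.2]) hγ, ?_⟩
      nlinarith [hv.1, hv.2]
    | succ n ih =>
      rw [hYrec]
      have h1 : 0 ≤ 1 - Real.sqrt (U n ω) := by
        have := Real.sqrt_le_one.mpr (hu n).2
        linarith
      have h2 : 1 - Real.sqrt (U n ω) ≤ 1 := by
        have := Real.sqrt_nonneg (U n ω); linarith
      exact ⟨mul_nonneg ih.1 h1, by nlinarith [ih.1, ih.2]⟩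
  -- integrability of Γ and Γ³
  have hfin : ∀ g : ℝ → ℝ, Integrable g volume →
      ∫⁻ t in Set.Ioi (0:ℝ), ENNReal.ofReal (g t) < ⊤ := by
    intro g hg
    calc ∫⁻ t in Set.Ioi (0:ℝ), ENNReal.ofReal (g t)
        ≤ ∫⁻ t, ENNReal.ofReal (g t) := setLIntegral_le_lintegral _ _
      _ ≤ ∫⁻ t, (‖g t‖₊ : ENNReal) := lintegral_mono fun t => by
          rw [← enorm_eq_nnnorm, Real.enorm_eq_ofReal_abs]; exact ENNReal.ofReal_le_ofReal (le_abs_self _)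
      _ < ⊤ := hg.2
  have hΓint : Integrable Γ μ := by
    refine ⟨hΓm.aestronglyMeasurable, ?_⟩
    rw [hasFiniteIntegral_iff_ofReal hΓ0, lintegral_eq_lintegral_meas_lt μ hΓ0 hΓm.aemeasurable]
    have hcongr : ∫⁻ t in Set.Ioi (0:ℝ), μ {a | t < Γ a}
        = ∫⁻ t in Set.Ioi (0:ℝ), ENNReal.ofReal (Real.exp (-(1/4) * t^2)) := by
      refine setLIntegral_congr_fun measurableSet_Ioi (fun t ht => ?_)
      rw [hΓ t (le_of_lt ht), show (-(t ^ 2) / 4) = (-(1/4) * t ^ 2) from by ring]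
    rw [hcongr]
    exact hfin _ (integrable_exp_neg_mul_sq (by norm_num))
  have hΓ3nn : ∀ᵐ ω ∂μ, 0 ≤ (Γ ω)^3 := hΓ0.mono fun ω h => pow_nonneg h 3
  have hΓ3int : Integrable (fun ω => (Γ ω)^3) μ := by
    refine ⟨(hΓm.pow_const 3).aestronglyMeasurable, ?_⟩
    rw [hasFiniteIntegral_iff_ofReal hΓ3nn]
    have hcube : ∀ ω, (Γ ω)^3 = ∫ t in (0:ℝ)..(Γ ω), 3*t^2 := by
      intro ω
      rw [intervalIntegral.integral_const_mul, integral_pow]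
      ring
    simp_rw [hcube]
    rw [lintegral_comp_eq_lintegral_meas_lt_mul (g := fun t => 3*t^2) μ hΓ0 hΓm.aemeasurable
      (fun t _ => ((continuous_const.mul (continuous_pow 2)).intervalIntegrable 0 t))
      (Filter.Eventually.of_forall fun t => by positivity)]
    have hcongr : ∫⁻ t in Set.Ioi (0:ℝ), μ {a | t < Γ a} * ENNReal.ofReal (3*t^2)
        = ∫⁻ t in Set.Ioi (0:ℝ), ENNReal.ofReal (3 * (t^2 * Real.exp (-(1/4) * t^2))) := by
      refine setLIntegral_congr_fun measurableSet_Ioi (fun t ht => ?_)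
      rw [hΓ t (le_of_lt ht), ← ENNReal.ofReal_mul (Real.exp_nonneg _)]
      congr 1
      rw [show (-(t ^ 2) / 4) = (-(1/4) * t ^ 2) from by ring]
      ring
    rw [hcongr]
    have hbase : Integrable (fun x : ℝ => x ^ ((2:ℕ):ℝ) * Real.exp (-(1/4) * x^2)) volume :=
      integrable_rpow_mul_exp_neg_mul_sq (by norm_num) (by norm_num)
    simp only [Real.rpow_natCast] at hbase
    exact hfin _ (hbase.const_mul 3)
  -- integrability of Y n, E n; mean of E n
  have hYint : ∀ n, Integrable (Y n) μ := fun n =>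
    Integrable.mono' hΓint (hYM n).aestronglyMeasurable
      (hYbound.mono fun ω h => by
        rw [Real.norm_eq_abs, abs_of_nonneg (h n).1]; exact (h n).2)
  have hY03int : Integrable (fun ω => (Y 0 ω)^3) μ :=
    Integrable.mono' hΓ3int ((hYM 0).pow_const 3).aestronglyMeasurable
      (hYbound.mono fun ω h => by
        rw [Real.norm_eq_abs, abs_pow, abs_of_nonneg (h 0).1]
        exact pow_le_pow_left₀ (h 0).1 (h 0).2 3)
  have hEint : ∀ n, Integrable (E n) μ := by
    intro n
    refine ⟨(hEm n).aestronglyMeasurable, ?_⟩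
    rw [hasFiniteIntegral_iff_ofReal (hE0 n),
      ← lintegral_map ENNReal.measurable_ofReal (hEm n), hE n, semaux_exp_ofReal]
    exact ENNReal.one_lt_top
  have hEmean : ∀ n, ∫ ω, E n ω ∂μ = 1 := by
    intro n
    have h1 : ∫ ω, E n ω ∂μ = ∫ x, x ∂(μ.map (E n)) :=
      (integral_map (hEm n).aemeasurable aestronglyMeasurable_id).symm
    rw [h1, hE n, semaux_exp_mean]
  -- integrals of functions of U n
  have hUphi : ∀ (n : ℕ) (φ : ℝ → ℝ), Continuous φ →
      ∫ ω, φ (U n ω) ∂μ = ∫ x in Set.Icc (0:ℝ) 1, φ x := by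
    intro n φ hφ
    rw [← integral_map (hUm n).aemeasurable hφ.aestronglyMeasurable, hU n]
  have h110 : ∀ n, ∫ ω, (1 - Real.sqrt (U n ω))^3 ∂μ = 1/10 := fun n => by
    rw [hUphi n (fun x => (1 - Real.sqrt x)^3)
      ((continuous_const.sub Real.continuous_sqrt).pow 3), semaux_int_cube]
  have h13 : ∀ n, ∫ ω, (1 - Real.sqrt (U n ω)) ∂μ = 1/3 := fun n => by
    rw [hUphi n (fun x => 1 - Real.sqrt x)
      (continuous_const.sub Real.continuous_sqrt), semaux_int_lin]
  have hsint3 : ∀ n, Integrable (fun ω => (1 - Real.sqrt (U n ω))^3) μ := by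
    intro n
    refine Integrable.mono' (integrable_const 1)
      ((measurable_const.sub (hsqrtm.comp (hUm n))).pow_const 3).aestronglyMeasurable
      ((hU01 n).mono fun ω h => ?_)
    have h1 : 0 ≤ 1 - Real.sqrt (U n ω) := by
      have := Real.sqrt_le_one.mpr h.2; linarith
    have h2 : 1 - Real.sqrt (U n ω) ≤ 1 := by
      have := Real.sqrt_nonneg (U n ω); linarith
    rw [Real.norm_eq_abs, abs_pow, abs_of_nonneg h1]
    calc (1 - Real.sqrt (U n ω))^3 ≤ 1^3 := pow_le_pow_left₀ h1 h2 3
      _ = 1 := one_pow 3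
  have hsint1 : ∀ n, Integrable (fun ω => 1 - Real.sqrt (U n ω)) μ := by
    intro n
    refine Integrable.mono' (integrable_const 1)
      (measurable_const.sub (hsqrtm.comp (hUm n))).aestronglyMeasurable
      ((hU01 n).mono fun ω h => ?_)
    have h1 : 0 ≤ 1 - Real.sqrt (U n ω) := by
      have := Real.sqrt_le_one.mpr h.2; linarith
    have h2 : 1 - Real.sqrt (U n ω) ≤ 1 := by
      have := Real.sqrt_nonneg (U n ω); linarith
    rw [Real.norm_eq_abs, abs_of_nonneg h1]; exact h2
  -- pointwise identity for the recursion
  have hid : ∀ n ω, (Y (n+1) ω)^3 / S (n+1) ω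
      = (1 - Real.sqrt (U n ω))^3 * ((Y n ω)^3 / S n ω + 4 * (Y n ω * E n ω)) := by
    intro n ω
    rw [div_eq_mul_one_div, hSrec n ω, hYrec n ω, div_eq_mul_one_div ((Y n ω)^3) (S n ω)]
    by_cases hy : Y n ω = 0
    · simp [hy]
    · field_simp
  -- the independence facts
  have I1 : ∀ n, IndepFun (fun ω => (1 - Real.sqrt (U n ω))^3)
      (fun ω => (Y n ω)^3 / S n ω + 4 * (Y n ω * E n ω)) μ := by
    intro n
    have hY' : Measurable[M (K n (n+1))] (Y n) :=
      (hYmeas n).mono (hMmono (hKmono le_rfl (Nat.zero_le _))) le_rfl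
    have hS' : Measurable[M (K n (n+1))] (S n) :=
      (hSmeas n).mono (hMmono (hKmono le_rfl n.le_succ)) le_rfl
    have hE' : Measurable[M (K n (n+1))] (E n) :=
      hXmem (Sum.inr (Sum.inl n)) (hmemE n.lt_succ_self)
    have hg : Measurable[M (K n (n+1))]
        (fun ω => (Y n ω)^3 / S n ω + 4 * (Y n ω * E n ω)) :=
      ((hY'.pow_const 3).div hS').add ((hY'.mul hE').const_mul 4)
    exact key (Sum.inl n) (K n (n+1)) hnotinU _ hg (fun x => (1 - Real.sqrt x)^3)
      ((measurable_const.sub hsqrtm).pow_const 3)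
  have I2 : ∀ n, IndepFun (Y n) (fun ω => 1 - Real.sqrt (U n ω)) μ := fun n =>
    (key (Sum.inl n) (K n 0) hnotinU _ (hYmeas n) (fun x => 1 - Real.sqrt x)
      (measurable_const.sub hsqrtm)).symm
  have I3 : ∀ n, IndepFun (Y n) (E n) μ := fun n =>
    (key (Sum.inr (Sum.inl n)) (K n 0) hnotinE _ (hYmeas n) id measurable_id).symm
  -- integrability of the recursion quantities
  have hYEint : ∀ n, Integrable (fun ω => Y n ω * E n ω) μ := fun n =>
    (I3 n).integrable_mul (hYint n) (hEint n)
  have hWint : ∀ n, Integrable (fun ω => (Y n ω)^3 / S n ω) μ →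
      Integrable (fun ω => (Y n ω)^3 / S n ω + 4 * (Y n ω * E n ω)) μ := fun n ih =>
    ih.add ((hYEint n).const_mul 4)
  have hAint : ∀ n, Integrable (fun ω => (Y n ω)^3 / S n ω) μ := by
    intro n
    induction n with
    | zero =>
      have hfe : (fun ω => (Y 0 ω)^3 / S 0 ω) = fun ω => (Y 0 ω)^3 := by
        funext ω; rw [hS0 ω, div_one]
      rw [hfe]; exact hY03int
    | succ n ih =>
      have hfe : (fun ω => (Y (n+1) ω)^3 / S (n+1) ω)
          = fun ω => (1 - Real.sqrt (U n ω))^3 * ((Y n ω)^3 / S n ω + 4 * (Y n ω * E n ω)) :=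
        funext (hid n)
      rw [hfe]
      exact (I1 n).integrable_mul (hsint3 n) (hWint n ih)
  -- the expectation recursions
  have hArec : ∀ n, ∫ ω, (Y (n+1) ω)^3 / S (n+1) ω ∂μ
      = 1/10 * (∫ ω, (Y n ω)^3 / S n ω ∂μ + 4 * ∫ ω, Y n ω ∂μ) := by
    intro n
    have h1 : ∫ ω, (Y (n+1) ω)^3 / S (n+1) ω ∂μ
        = ∫ ω, (1 - Real.sqrt (U n ω))^3 * ((Y n ω)^3 / S n ω + 4 * (Y n ω * E n ω)) ∂μ :=
      integral_congr_ae (Filter.Eventually.of_forall (hid n))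
    have h2 : ∫ ω, (1 - Real.sqrt (U n ω))^3 * ((Y n ω)^3 / S n ω + 4 * (Y n ω * E n ω)) ∂μ
        = (∫ ω, (1 - Real.sqrt (U n ω))^3 ∂μ)
          * ∫ ω, ((Y n ω)^3 / S n ω + 4 * (Y n ω * E n ω)) ∂μ :=
      IndepFun.integral_fun_mul_eq_mul_integral (I1 n) (hsint3 n).aestronglyMeasurable (hWint n (hAint n)).aestronglyMeasurable
    have h4 : ∫ ω, Y n ω * E n ω ∂μ = (∫ ω, Y n ω ∂μ) * ∫ ω, E n ω ∂μ :=
      IndepFun.integral_fun_mul_eq_mul_integral (I3 n) (hYint n).aestronglyMeasurable (hEint n).aestronglyMeasurable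
    have h3 : ∫ ω, ((Y n ω)^3 / S n ω + 4 * (Y n ω * E n ω)) ∂μ
        = ∫ ω, (Y n ω)^3 / S n ω ∂μ + 4 * ∫ ω, Y n ω ∂μ := by
      rw [integral_add (hAint n) ((hYEint n).const_mul 4), integral_const_mul, h4,
        hEmean n, mul_one]
    rw [h1, h2, h3, h110 n]
  have hBrec : ∀ n, ∫ ω, Y (n+1) ω ∂μ = 1/3 * ∫ ω, Y n ω ∂μ := by
    intro n
    have h1 : ∫ ω, Y (n+1) ω ∂μ = ∫ ω, Y n ω * (1 - Real.sqrt (U n ω)) ∂μ :=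
      integral_congr_ae (Filter.Eventually.of_forall (hYrec n))
    have h2 : ∫ ω, Y n ω * (1 - Real.sqrt (U n ω)) ∂μ
        = (∫ ω, Y n ω ∂μ) * ∫ ω, (1 - Real.sqrt (U n ω)) ∂μ :=
      IndepFun.integral_fun_mul_eq_mul_integral (I2 n) (hYint n).aestronglyMeasurable (hsint1 n).aestronglyMeasurable
    rw [h1, h2, h13 n]
    ring
  have hB : ∀ n, ∫ ω, Y n ω ∂μ = (1/3)^n * ∫ ω, Y 0 ω ∂μ := by
    intro n
    induction n with
    | zero => simp
    | succ n ih => rw [hBrec n, ih, pow_succ]; ring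
  have hb0 : 0 ≤ ∫ ω, Y 0 ω ∂μ :=
    integral_nonneg_of_ae (hYbound.mono fun ω h => (h 0).1)
  have ha0 : 0 ≤ ∫ ω, (Y 0 ω)^3 ∂μ :=
    integral_nonneg_of_ae (hYbound.mono fun ω h => pow_nonneg (h 0).1 3)
  have hA0 : ∫ ω, (Y 0 ω)^3 / S 0 ω ∂μ = ∫ ω, (Y 0 ω)^3 ∂μ :=
    integral_congr_ae (Filter.Eventually.of_forall fun ω => by simp [hS0 ω])
  -- the main induction
  have claim : ∀ n, (3:ℝ)^n * ∫ ω, (Y n ω)^3 / S n ω ∂μ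
      ≤ (3/10)^n * ∫ ω, (Y 0 ω)^3 ∂μ + 12/7 * ∫ ω, Y 0 ω ∂μ := by
    intro n
    induction n with
    | zero =>
      simp only [pow_zero, one_mul]
      rw [hA0]
      linarith
    | succ n ih =>
      rw [hArec n, hB n]
      have h3n : (3:ℝ)^n * (1/3)^n = 1 := by
        rw [← mul_pow]; norm_num
      calc (3:ℝ)^(n+1) * (1/10 * (∫ ω, (Y n ω)^3 / S n ω ∂μ + 4 * ((1/3)^n * ∫ ω, Y 0 ω ∂μ)))
          = 3/10 * ((3:ℝ)^n * ∫ ω, (Y n ω)^3 / S n ω ∂μ)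
            + 6/5 * ((3:ℝ)^n * (1/3)^n) * ∫ ω, Y 0 ω ∂μ := by ring
        _ = 3/10 * ((3:ℝ)^n * ∫ ω, (Y n ω)^3 / S n ω ∂μ) + 6/5 * ∫ ω, Y 0 ω ∂μ := by
            rw [h3n]; ring
        _ ≤ 3/10 * ((3/10)^n * ∫ ω, (Y 0 ω)^3 ∂μ + 12/7 * ∫ ω, Y 0 ω ∂μ)
            + 6/5 * ∫ ω, Y 0 ω ∂μ := by linarith
        _ = (3/10)^(n+1) * ∫ ω, (Y 0 ω)^3 ∂μ + (3/10 * (12/7) + 6/5) * ∫ ω, Y 0 ω ∂μ := by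
            rw [pow_succ]; ring
        _ ≤ (3/10)^(n+1) * ∫ ω, (Y 0 ω)^3 ∂μ + 12/7 * ∫ ω, Y 0 ω ∂μ := by norm_num
  constructor
  · intro n
    have hre : ∫ ω, (3:ℝ)^n * (Y n ω)^3 / S n ω ∂μ
        = (3:ℝ)^n * ∫ ω, (Y n ω)^3 / S n ω ∂μ := by
      rw [← integral_const_mul]
      refine integral_congr_ae (Filter.Eventually.of_forall fun ω => ?_)
      simp only [mul_div_assoc]
    rw [hre]
    exact claim n
  · intro n
    have h1 := claim n
    have hpow : ((3:ℝ)/10)^n ≤ 1 := by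
      apply pow_le_one₀ <;> norm_num
    have h2 : (3:ℝ)^n * ∫ ω, (Y n ω)^3 / S n ω ∂μ
        ≤ ∫ ω, (Y 0 ω)^3 ∂μ + 12/7 * ∫ ω, Y 0 ω ∂μ := by
      nlinarith [ha0]
    have hpos : (0:ℝ) < 3^n := by positivity
    rw [zpow_neg, zpow_natCast, ← div_eq_mul_inv, le_div_iff₀ hpos]
    linarith [h2]

end Main
end

section
/- In the seminal-curve recursion, for every N ≥ 1 one has E[Y_N³/(G_N · S_N)] ≤ 2 · 6^{−(N−1)}. -/
open MeasureTheory ProbabilityTheory Filter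

section SeminalAux
open Set
open MeasureTheory ProbabilityTheory Filter Set

lemma sc_prod_integral {Ω ι : Type*} [MeasurableSpace Ω] {μ : Measure Ω}
    [IsProbabilityMeasure μ] {X : ι → Ω → ℝ}
    (hindep : iIndepFun X μ)
    (hmeas : ∀ i, Measurable (X i)) (s : Finset ι) (hint : ∀ i ∈ s, Integrable (X i) μ) :
    Integrable (fun ω => ∏ i ∈ s, X i ω) μ ∧
      ∫ ω, ∏ i ∈ s, X i ω ∂μ = ∏ i ∈ s, ∫ ω, X i ω ∂μ := by
  classical
  induction s using Finset.induction_on with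
  | empty => simpa using integrable_const (1:ℝ)
  | insert a s hi ih =>
    have ih' := ih (fun i h => hint i (Finset.mem_insert_of_mem h))
    have hindepa : IndepFun (X a) (fun ω => ∏ i ∈ s, X i ω) μ := by
      have := (hindep.indepFun_finset_prod_of_notMem hmeas hi).symm
      have hp : (∏ j ∈ s, X j) = fun ω => ∏ i ∈ s, X i ω := by
        funext ω; simp [Finset.prod_apply]
      rwa [hp] at this
    have ha := hint a (Finset.mem_insert_self a s)
    have funeq : (fun ω => ∏ i ∈ insert a s, X i ω)
        = X a * fun ω => ∏ i ∈ s, X i ω := by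
      funext ω; simp [Finset.prod_insert hi]
    constructor
    · rw [funeq]; exact hindepa.integrable_mul ha ih'.1
    · rw [funeq, hindepa.integral_mul_eq_mul_integral ha.1 ih'.1.1, ih'.2,
        Finset.prod_insert hi]

lemma sc_int_f :
    IntegrableOn (fun x => (1 - Real.sqrt x)^3 / Real.sqrt x) (Icc (0:ℝ) 1) volume ∧
      ∫ x in Icc (0:ℝ) 1, (1 - Real.sqrt x)^3 / Real.sqrt x = 1/2 := by
  set φ : ℝ → ℝ := fun x => x ^ (-(1/2):ℝ) - 3 + 3 * x ^ ((1/2):ℝ) - x with hφ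
  have heq : EqOn (fun x => (1 - Real.sqrt x)^3 / Real.sqrt x) φ (Ioc (0:ℝ) 1) := by
    intro x hx
    have hx0 : 0 < x := hx.1
    have hs : 0 < Real.sqrt x := Real.sqrt_pos.2 hx0
    have hsq : Real.sqrt x ^ 2 = x := Real.sq_sqrt hx0.le
    have h12 : x ^ ((1/2):ℝ) = Real.sqrt x := (Real.sqrt_eq_rpow x).symm
    have hneg : x ^ (-(1/2):ℝ) = (Real.sqrt x)⁻¹ := by
      rw [Real.rpow_neg hx0.le, h12]
    simp only [φ, h12, hneg]
    field_simp
    nlinarith [hsq, hs]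
  have hii : IntervalIntegrable φ volume 0 1 := by
    have I1 : IntervalIntegrable (fun x : ℝ => x ^ (-(1/2):ℝ)) volume 0 1 :=
      intervalIntegral.intervalIntegrable_rpow' (by norm_num)
    have I2 : IntervalIntegrable (fun x : ℝ => x ^ ((1/2):ℝ)) volume 0 1 :=
      intervalIntegral.intervalIntegrable_rpow' (by norm_num)
    exact ((I1.sub (intervalIntegrable_const)).add (I2.const_mul 3)).sub
      intervalIntegral.intervalIntegrable_id
  have hIoc : IntegrableOn (fun x => (1 - Real.sqrt x)^3 / Real.sqrt x) (Ioc (0:ℝ) 1) volume :=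
    (hii.1.congr_fun (fun x hx => (heq hx).symm) measurableSet_Ioc)
  constructor
  · exact (integrableOn_Icc_iff_integrableOn_Ioc (by simp)).2 hIoc
  · rw [MeasureTheory.integral_Icc_eq_integral_Ioc,
      setIntegral_congr_fun measurableSet_Ioc heq,
      ← intervalIntegral.integral_of_le zero_le_one]
    have I1 : IntervalIntegrable (fun x : ℝ => x ^ (-(1/2):ℝ)) volume 0 1 :=
      intervalIntegral.intervalIntegrable_rpow' (by norm_num)
    have I2 : IntervalIntegrable (fun x : ℝ => x ^ ((1/2):ℝ)) volume 0 1 :=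
      intervalIntegral.intervalIntegrable_rpow' (by norm_num)
    show ∫ x in (0:ℝ)..1, (x ^ (-(1/2):ℝ) - 3 + 3 * x ^ ((1/2):ℝ) - x) = 1/2
    rw [intervalIntegral.integral_sub (((I1.sub intervalIntegrable_const).add (I2.const_mul 3)))
      intervalIntegral.intervalIntegrable_id,
      intervalIntegral.integral_add (I1.sub intervalIntegrable_const) (I2.const_mul 3),
      intervalIntegral.integral_sub I1 intervalIntegrable_const,
      intervalIntegral.integral_const_mul,
      integral_rpow (Or.inl (by norm_num)), integral_rpow (Or.inl (by norm_num)),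
      intervalIntegral.integral_const, integral_id]
    rw [Real.one_rpow, Real.zero_rpow (by norm_num), Real.one_rpow,
      Real.zero_rpow (by norm_num)]
    norm_num

lemma sc_int_g :
    IntegrableOn (fun x => (1 - Real.sqrt x)^2) (Icc (0:ℝ) 1) volume ∧
      ∫ x in Icc (0:ℝ) 1, (1 - Real.sqrt x)^2 = 1/6 := by
  have hcont : Continuous (fun x : ℝ => (1 - Real.sqrt x)^2) :=
    (continuous_const.sub Real.continuous_sqrt).pow 2
  refine ⟨hcont.integrableOn_Icc, ?_⟩
  have heq : EqOn (fun x => (1 - Real.sqrt x)^2)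
      (fun x : ℝ => 1 - 2 * x ^ ((1/2):ℝ) + x) (Ioc (0:ℝ) 1) := by
    intro x hx
    have hsq : Real.sqrt x ^ 2 = x := Real.sq_sqrt hx.1.le
    have h12 : x ^ ((1/2):ℝ) = Real.sqrt x := (Real.sqrt_eq_rpow x).symm
    simp only [h12]
    nlinarith [hsq]
  have I2 : IntervalIntegrable (fun x : ℝ => x ^ ((1/2):ℝ)) volume 0 1 :=
    intervalIntegral.intervalIntegrable_rpow' (by norm_num)
  rw [MeasureTheory.integral_Icc_eq_integral_Ioc,
    setIntegral_congr_fun measurableSet_Ioc heq,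
    ← intervalIntegral.integral_of_le zero_le_one]
  rw [intervalIntegral.integral_add (intervalIntegrable_const.sub (I2.const_mul 2))
      intervalIntegral.intervalIntegrable_id,
    intervalIntegral.integral_sub intervalIntegrable_const (I2.const_mul 2),
    intervalIntegral.integral_const_mul, integral_rpow (Or.inl (by norm_num)),
    intervalIntegral.integral_const, integral_id]
  rw [Real.one_rpow, Real.zero_rpow (by norm_num)]
  norm_num

lemma sc_int_v :
    IntegrableOn (fun x : ℝ => (1 - x)^2) (Icc (0:ℝ) 1) volume ∧
      ∫ x in Icc (0:ℝ) 1, (1 - x)^2 = 1/3 := by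
  have hcont : Continuous (fun x : ℝ => (1 - x)^2) :=
    (continuous_const.sub continuous_id).pow 2
  refine ⟨hcont.integrableOn_Icc, ?_⟩
  rw [MeasureTheory.integral_Icc_eq_integral_Ioc,
    ← intervalIntegral.integral_of_le zero_le_one]
  have := intervalIntegral.integral_comp_sub_left (a := (0:ℝ)) (b := 1) (fun y => y^2) 1
  simp only [sub_zero, sub_self] at this
  rw [this, integral_pow]
  norm_num

lemma sc_gamma_sq {Ω : Type*} [MeasurableSpace Ω] {μ : Measure Ω} [IsProbabilityMeasure μ]
    {Γ : Ω → ℝ} (hΓm : Measurable Γ)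
    (hΓ : ∀ γ : ℝ, 0 ≤ γ → μ {ω | Γ ω > γ} = ENNReal.ofReal (Real.exp (-(γ ^ 2) / 4))) :
    (∀ᵐ ω ∂μ, 0 < Γ ω) ∧ Integrable (fun ω => Γ ω ^ 2) μ ∧ ∫ ω, Γ ω ^ 2 ∂μ = 4 := by
  have h0 : μ {ω | Γ ω > 0} = 1 := by
    have := hΓ 0 le_rfl
    norm_num at this
    exact this
  have hpos : ∀ᵐ ω ∂μ, 0 < Γ ω := by
    rw [ae_iff]
    have : {ω | ¬ 0 < Γ ω} = {ω | Γ ω > 0}ᶜ := by ext ω; simp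
    rw [this, prob_compl_eq_zero_iff (measurableSet_lt measurable_const hΓm)]
    exact h0
  have hnn : (0:Ω → ℝ) ≤ᵐ[μ] fun ω => Γ ω ^ 2 := Eventually.of_forall fun ω => sq_nonneg _
  have hlin : ∫⁻ ω, ENNReal.ofReal (Γ ω ^ 2) ∂μ = ENNReal.ofReal 4 := by
    rw [lintegral_eq_lintegral_meas_lt μ hnn ((hΓm.pow_const 2).aemeasurable)]
    have hmeas_t : ∀ t ∈ Ioi (0:ℝ), μ {a | t < Γ a ^ 2} = ENNReal.ofReal (Real.exp (-t/4)) := by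
      intro t ht
      have hset : {a | t < Γ a ^ 2} =ᵐ[μ] {a | Real.sqrt t < Γ a} := by
        filter_upwards [hpos] with ω hω
        have : (t < Γ ω ^ 2) ↔ (Real.sqrt t < Γ ω) := (Real.sqrt_lt' hω).symm
        simp only [Set.mem_setOf_eq, eq_iff_iff]
        exact this
      rw [measure_congr hset]
      have := hΓ (Real.sqrt t) (Real.sqrt_nonneg t)
      rwa [Real.sq_sqrt (le_of_lt ht)] at this
    rw [setLIntegral_congr_fun measurableSet_Ioi hmeas_t]
    have hint : IntegrableOn (fun t : ℝ => Real.exp (-t/4)) (Ioi 0) volume := by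
      have := exp_neg_integrableOn_Ioi 0 (by norm_num : (0:ℝ) < 4⁻¹)
      refine this.congr_fun (fun t _ => ?_) measurableSet_Ioi
      congr 1; ring
    rw [← ofReal_integral_eq_lintegral_ofReal hint
      (Eventually.of_forall fun t => (Real.exp_pos _).le)]
    congr 1
    have hrw : ∀ t : ℝ, Real.exp (-t/4) = (fun y => Real.exp (-y)) (4⁻¹ * t) := by
      intro t; simp only; congr 1; ring
    simp_rw [hrw]
    rw [MeasureTheory.integral_comp_mul_left_Ioi (fun y => Real.exp (-y)) 0
      (by norm_num : (0:ℝ) < 4⁻¹)]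
    rw [mul_zero, integral_exp_neg_Ioi]
    norm_num
  refine ⟨hpos, ?_, ?_⟩
  · refine ⟨(hΓm.pow_const 2).aestronglyMeasurable, ?_⟩
    rw [hasFiniteIntegral_iff_ofReal hnn, hlin]
    exact ENNReal.ofReal_lt_top
  · rw [integral_eq_lintegral_of_nonneg_ae hnn (hΓm.pow_const 2).aestronglyMeasurable, hlin]
    norm_num


section
variable {Ω : Type*} [MeasurableSpace Ω] {μ : Measure Ω} [IsProbabilityMeasure μ]

lemma sc_ae_mem {W : Ω → ℝ} (hWm : Measurable W)
    (hW : μ.map W = volume.restrict (Icc (0:ℝ) 1))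
    {s : Set ℝ} (hs : MeasurableSet s) (hsub : sᶜ ∩ Icc 0 1 ⊆ ({0, 1} : Set ℝ)) :
    ∀ᵐ ω ∂μ, W ω ∈ s := by
  rw [ae_iff]
  have h1 : {ω | ¬ W ω ∈ s} = W ⁻¹' sᶜ := rfl
  rw [h1, ← Measure.map_apply hWm hs.compl, hW,
    Measure.restrict_apply hs.compl]
  refine measure_mono_null hsub ?_
  rw [Set.insert_eq]
  exact measure_union_null (measure_singleton 0) (measure_singleton 1)

lemma sc_exp_nonneg {W : Ω → ℝ} (hWm : Measurable W)
    (hW : μ.map W = expMeasure 1) : ∀ᵐ ω ∂μ, 0 ≤ W ω := by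
  rw [ae_iff]
  have h1 : {ω | ¬ 0 ≤ W ω} = W ⁻¹' (Iio 0) := by ext ω; simp
  rw [h1, ← Measure.map_apply hWm measurableSet_Iio, hW]
  show gammaMeasure 1 1 (Iio 0) = 0
  rw [gammaMeasure, withDensity_apply _ measurableSet_Iio]
  exact lintegral_gammaPDF_of_nonpos le_rfl

end

end SeminalAux

theorem seminal_curve_YcubedGS_bound
    {Ω : Type*} [MeasurableSpace Ω] (μ : Measure Ω) [IsProbabilityMeasure μ]
    -- the driving random variables: `U n`, `E n` represent the mathematical
    -- `U_{n+1}`, `E_{n+1}` (indexing shifted by one)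
    (U E : ℕ → Ω → ℝ) (Γ V : Ω → ℝ) (Y S G : ℕ → Ω → ℝ)
    (hUm : ∀ n, Measurable (U n)) (hEm : ∀ n, Measurable (E n))
    (hΓm : Measurable Γ) (hVm : Measurable V)
    -- each `U n` and `V` is uniformly distributed on `[0,1]`
    (hU : ∀ n, μ.map (U n) = volume.restrict (Set.Icc (0:ℝ) 1))
    (hV : μ.map V = volume.restrict (Set.Icc (0:ℝ) 1))
    -- each `E n` has the standard exponential distribution (rate 1)
    (hE : ∀ n, μ.map (E n) = expMeasure 1)
    -- `Γ` has the Rayleigh(√2) distribution: `P(Γ > γ) = exp (-γ²/4)` for `γ ≥ 0`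
    (hΓ : ∀ γ : ℝ, 0 ≤ γ → μ {ω | Γ ω > γ} = ENNReal.ofReal (Real.exp (-(γ ^ 2) / 4)))
    -- `(U n)`, `(E n)`, `Γ`, `V` are mutually independent
    (hindep : iIndepFun
      (Sum.elim U (Sum.elim E (fun b : Bool => bif b then Γ else V))) μ)
    -- initial conditions `S 0 = 1`, `Y 0 = (1 - V)·Γ`, `G 0 = V·Γ`
    (hS0 : ∀ ω, S 0 ω = 1)
    (hY0 : ∀ ω, Y 0 ω = (1 - V ω) * Γ ω)
    (hG0 : ∀ ω, G 0 ω = V ω * Γ ω)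
    -- the seminal-curve recursion
    (hYrec : ∀ n ω, Y (n + 1) ω = Y n ω * (1 - Real.sqrt (U n ω)))
    (hSrec : ∀ n ω, 1 / S (n + 1) ω = 1 / S n ω + 4 / (Y n ω) ^ 2 * E n ω)
    (hGrec : ∀ n ω, G (n + 1) ω = G n ω + Y n ω / S (n + 1) ω * Real.sqrt (U n ω))
    :
    ∀ N : ℕ, 1 ≤ N →
      ∫ ω, (Y N ω) ^ 3 / (G N ω * S N ω) ∂μ ≤ 2 * (6:ℝ) ^ (-((N:ℤ) - 1)) := by
  classical
  intro N hN
  obtain ⟨n, rfl⟩ : ∃ n, N = n + 1 := ⟨N - 1, by omega⟩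
  -- the driving family and composed factors
  set F : ℕ ⊕ ℕ ⊕ Bool → Ω → ℝ :=
    Sum.elim U (Sum.elim E (fun b : Bool => bif b then Γ else V)) with hFdef
  set g : ℕ ⊕ ℕ ⊕ Bool → ℝ → ℝ :=
    Sum.elim
      (fun k => if k = n then (fun x => (1 - Real.sqrt x) ^ 3 / Real.sqrt x)
        else (fun x => (1 - Real.sqrt x) ^ 2))
      (Sum.elim (fun _ => fun _ => (1:ℝ))
        (fun b => bif b then (fun x => x ^ 2) else (fun x => (1 - x) ^ 2))) with hgdef
  have hgmeas : ∀ i, Measurable (g i) := by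
    rintro (k | k | b)
    · simp only [hgdef, Sum.elim_inl]
      split_ifs
      · exact ((measurable_const.sub Real.continuous_sqrt.measurable).pow_const 3).div Real.continuous_sqrt.measurable
      · exact (measurable_const.sub Real.continuous_sqrt.measurable).pow_const 2
    · exact measurable_const
    · cases b
      · exact (measurable_const.sub measurable_id).pow_const 2
      · exact measurable_id.pow_const 2
  have hFmeas : ∀ i, Measurable (F i) := by
    rintro (k | k | b)
    · exact hUm k
    · exact hEm k
    · cases b
      · exact hVm
      · exact hΓm
  set X : ℕ ⊕ ℕ ⊕ Bool → Ω → ℝ := fun i ω => g i (F i ω) with hXdef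
  have hXindep : iIndepFun X μ := hindep.comp g hgmeas
  have hXmeas : ∀ i, Measurable (X i) := fun i => (hgmeas i).comp (hFmeas i)
  -- the index set
  set t : Finset (ℕ ⊕ ℕ ⊕ Bool) :=
    (Finset.range (n+1)).map ⟨Sum.inl, Sum.inl_injective⟩ with htdef
  set sfin : Finset (ℕ ⊕ ℕ ⊕ Bool) :=
    insert (Sum.inr (Sum.inr true)) (insert (Sum.inr (Sum.inr false)) t) with hsdef
  have hmem1 : (Sum.inr (Sum.inr true) : ℕ ⊕ ℕ ⊕ Bool) ∉
      insert (Sum.inr (Sum.inr false)) t := by simp [htdef]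
  have hmem2 : (Sum.inr (Sum.inr false) : ℕ ⊕ ℕ ⊕ Bool) ∉ t := by simp [htdef]
  -- integrals of the individual factors
  have keyW : ∀ (W : Ω → ℝ), Measurable W → μ.map W = volume.restrict (Set.Icc (0:ℝ) 1) →
      ∀ f : ℝ → ℝ, Measurable f → IntegrableOn f (Set.Icc (0:ℝ) 1) volume →
      Integrable (fun ω => f (W ω)) μ ∧
        ∫ ω, f (W ω) ∂μ = ∫ x in Set.Icc (0:ℝ) 1, f x := by
    intro W hWm hWmap f hfm hfint
    have hsm : AEStronglyMeasurable f (μ.map W) := hfm.aestronglyMeasurable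
    constructor
    · have := (integrable_map_measure hsm hWm.aemeasurable).1 (by rwa [hWmap])
      exact this
    · rw [← integral_map hWm.aemeasurable hsm, hWmap]
  -- values
  have hval_gam := sc_gamma_sq hΓm hΓ
  have hval_true : Integrable (X (Sum.inr (Sum.inr true))) μ ∧
      ∫ ω, X (Sum.inr (Sum.inr true)) ω ∂μ = 4 := ⟨hval_gam.2.1, hval_gam.2.2⟩
  have hval_false : Integrable (X (Sum.inr (Sum.inr false))) μ ∧
      ∫ ω, X (Sum.inr (Sum.inr false)) ω ∂μ = 1/3 := by
    have := keyW V hVm hV (fun x => (1 - x)^2)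
      ((measurable_const.sub measurable_id).pow_const 2) sc_int_v.1
    refine ⟨this.1, ?_⟩
    have h3 : ∫ ω, X (Sum.inr (Sum.inr false)) ω ∂μ
        = ∫ x in Set.Icc (0:ℝ) 1, (1 - x)^2 := this.2
    rw [h3]; exact sc_int_v.2
  have hval_inl : ∀ k, k ∈ Finset.range (n+1) → Integrable (X (Sum.inl k)) μ ∧
      ∫ ω, X (Sum.inl k) ω ∂μ = if k = n then 1/2 else 1/6 := by
    intro k _
    by_cases hk : k = n
    · subst hk
      have := keyW (U k) (hUm k) (hU k) (fun x => (1 - Real.sqrt x)^3 / Real.sqrt x)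
        (((measurable_const.sub Real.continuous_sqrt.measurable).pow_const 3).div
          Real.continuous_sqrt.measurable) sc_int_f.1
      refine ⟨?_, ?_⟩
      · have h2 : X (Sum.inl k) = fun ω => (1 - Real.sqrt (U k ω))^3 / Real.sqrt (U k ω) := by
          funext ω; simp [hXdef, hgdef, hFdef]
        rw [h2]; exact this.1
      · have h2 : ∫ ω, X (Sum.inl k) ω ∂μ
            = ∫ ω, (1 - Real.sqrt (U k ω))^3 / Real.sqrt (U k ω) ∂μ := by
          congr 1; funext ω; simp [hXdef, hgdef, hFdef]
        rw [h2, this.2, sc_int_f.2, if_pos rfl]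
    · have := keyW (U k) (hUm k) (hU k) (fun x => (1 - Real.sqrt x)^2)
        ((measurable_const.sub Real.continuous_sqrt.measurable).pow_const 2) sc_int_g.1
      refine ⟨?_, ?_⟩
      · have h2 : X (Sum.inl k) = fun ω => (1 - Real.sqrt (U k ω))^2 := by
          funext ω; simp [hXdef, hgdef, hFdef, hk]
        rw [h2]; exact this.1
      · have h2 : ∫ ω, X (Sum.inl k) ω ∂μ = ∫ ω, (1 - Real.sqrt (U k ω))^2 ∂μ := by
          congr 1; funext ω; simp [hXdef, hgdef, hFdef, hk]
        rw [h2, this.2, sc_int_g.2, if_neg hk]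
  have hXint : ∀ i ∈ sfin, Integrable (X i) μ := by
    intro i hi
    rw [hsdef] at hi
    rcases Finset.mem_insert.1 hi with h | hi
    · subst h; exact hval_true.1
    rcases Finset.mem_insert.1 hi with h | hi
    · subst h; exact hval_false.1
    rw [htdef] at hi
    obtain ⟨k, hk, rfl⟩ := Finset.mem_map.1 hi
    exact (hval_inl k hk).1
  -- the product of the expectations
  have hPint := sc_prod_integral hXindep hXmeas sfin hXint
  have hprodval : ∏ i ∈ sfin, ∫ ω, X i ω ∂μ = 4 * ((1/3) * ((1/6)^n * (1/2))) := by
    rw [hsdef, Finset.prod_insert hmem1, Finset.prod_insert hmem2, htdef,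
      Finset.prod_map, hval_true.2, hval_false.2]
    simp only [Function.Embedding.coeFn_mk]
    congr 1
    congr 1
    have hcong : ∏ k ∈ Finset.range (n+1), ∫ ω, X (Sum.inl k) ω ∂μ
        = ∏ k ∈ Finset.range (n+1), (if k = n then (1:ℝ)/2 else 1/6) :=
      Finset.prod_congr rfl (fun k hk => (hval_inl k hk).2)
    rw [hcong, Finset.prod_range_succ, if_pos rfl]
    congr 1
    have hcong2 : ∏ k ∈ Finset.range n, (if k = n then (1:ℝ)/2 else 1/6)
        = ∏ _k ∈ Finset.range n, (1:ℝ)/6 :=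
      Finset.prod_congr rfl fun k hk => if_neg (Finset.mem_range.1 hk).ne
    rw [hcong2, Finset.prod_const, Finset.card_range]
  -- closed form for Y
  have hYclosed : ∀ m ω, Y m ω
      = (1 - V ω) * Γ ω * ∏ k ∈ Finset.range m, (1 - Real.sqrt (U k ω)) := by
    intro m
    induction m with
    | zero => intro ω; simp [hY0]
    | succ m ih =>
      intro ω
      rw [hYrec, ih, Finset.prod_range_succ]; ring
  -- pointwise identification of the dominating product
  have hptP : ∀ ω, Y n ω^2 * ((1 - Real.sqrt (U n ω))^3 / Real.sqrt (U n ω))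
      = ∏ i ∈ sfin, X i ω := by
    intro ω
    rw [hsdef, Finset.prod_insert hmem1, Finset.prod_insert hmem2, htdef, Finset.prod_map]
    simp only [Function.Embedding.coeFn_mk]
    have hXt : X (Sum.inr (Sum.inr true)) ω = Γ ω ^ 2 := by simp [hXdef, hgdef, hFdef]
    have hXf : X (Sum.inr (Sum.inr false)) ω = (1 - V ω) ^ 2 := by simp [hXdef, hgdef, hFdef]
    have hXr : ∏ k ∈ Finset.range (n+1), X (Sum.inl k) ω
        = (∏ k ∈ Finset.range n, (1 - Real.sqrt (U k ω))^2)
          * ((1 - Real.sqrt (U n ω))^3 / Real.sqrt (U n ω)) := by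
      rw [Finset.prod_range_succ]
      congr 1
      · refine Finset.prod_congr rfl fun k hk => ?_
        simp [hXdef, hgdef, hFdef, (Finset.mem_range.1 hk).ne]
      · simp [hXdef, hgdef, hFdef]
    rw [hXt, hXf, hXr, hYclosed n ω]
    rw [mul_pow, mul_pow, ← Finset.prod_pow]
    ring
  -- almost sure facts
  have hUae : ∀ k, ∀ᵐ ω ∂μ, U k ω ∈ Set.Ioo (0:ℝ) 1 := by
    intro k
    refine sc_ae_mem (hUm k) (hU k) measurableSet_Ioo ?_
    rintro x ⟨hx1, hx2, hx3⟩
    simp only [Set.mem_compl_iff, Set.mem_Ioo, not_and_or, not_lt] at hx1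
    simp only [Set.mem_insert_iff, Set.mem_singleton_iff]
    rcases hx1 with h | h
    · left; exact le_antisymm h hx2
    · right; exact le_antisymm hx3 h
  have hVae : ∀ᵐ ω ∂μ, V ω ∈ Set.Ico (0:ℝ) 1 := by
    refine sc_ae_mem hVm hV measurableSet_Ico ?_
    rintro x ⟨hx1, hx2, hx3⟩
    simp only [Set.mem_compl_iff, Set.mem_Ico, not_and_or, not_lt, not_le] at hx1
    simp only [Set.mem_insert_iff, Set.mem_singleton_iff]
    rcases hx1 with h | h
    · exact absurd hx2 (not_le.2 h)
    · right; exact le_antisymm hx3 h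
  have hEae : ∀ k, ∀ᵐ ω ∂μ, 0 ≤ E k ω := fun k => sc_exp_nonneg (hEm k) (hE k)
  have hΓae : ∀ᵐ ω ∂μ, 0 < Γ ω := hval_gam.1
  -- the pointwise bound
  have hbound : ∀ᵐ ω ∂μ,
      0 ≤ Y (n+1) ω ^ 3 / (G (n+1) ω * S (n+1) ω) ∧
      Y (n+1) ω ^ 3 / (G (n+1) ω * S (n+1) ω) ≤ ∏ i ∈ sfin, X i ω := by
    filter_upwards [ae_all_iff.2 hUae, ae_all_iff.2 hEae, hΓae, hVae]
      with ω hU' hE' hΓ' hV'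
    have hrec : ∀ m, 0 < Y m ω ∧ 0 < 1 / S m ω ∧ 0 ≤ G m ω := by
      intro m
      induction m with
      | zero =>
        refine ⟨?_, ?_, ?_⟩
        · rw [hY0]; exact mul_pos (by linarith [hV'.2]) hΓ'
        · rw [hS0]; norm_num
        · rw [hG0]; exact mul_nonneg hV'.1 hΓ'.le
      | succ m ih =>
        obtain ⟨hYm, hSm, hGm⟩ := ih
        have h1 : 0 < 1 / S (m+1) ω := by
          rw [hSrec]
          have h2 : 0 ≤ 4 / Y m ω ^ 2 * E m ω :=
            mul_nonneg (by positivity) (hE' m)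
          linarith
        have hSm1 : 0 < S (m+1) ω := by
          rw [one_div] at h1; exact inv_pos.1 h1
        refine ⟨?_, h1, ?_⟩
        · rw [hYrec]
          have hs1 : Real.sqrt (U m ω) < 1 :=
            (Real.sqrt_lt' one_pos).2 (by simpa using (hU' m).2)
          exact mul_pos hYm (by linarith)
        · rw [hGrec]
          exact add_nonneg hGm
            (mul_nonneg (div_nonneg hYm.le hSm1.le) (Real.sqrt_nonneg _))
    have ht0 : 0 < Real.sqrt (U n ω) := Real.sqrt_pos.2 (hU' n).1
    have ht1 : Real.sqrt (U n ω) < 1 :=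
      (Real.sqrt_lt' one_pos).2 (by simpa using (hU' n).2)
    have hYn : 0 < Y n ω := (hrec n).1
    have hGn : 0 ≤ G n ω := (hrec n).2.2
    have hS1 : 0 < 1 / S (n+1) ω := (hrec (n+1)).2.1
    have hSn1 : 0 < S (n+1) ω := by rw [one_div] at hS1; exact inv_pos.1 hS1
    have hYn1 : 0 < Y (n+1) ω := (hrec (n+1)).1
    have hGn1 : 0 < G (n+1) ω := by
      rw [hGrec]
      exact add_pos_of_nonneg_of_pos hGn
        (mul_pos (div_pos hYn hSn1) ht0)
    constructor
    · positivity
    · rw [← hptP ω]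
      have hDen : G (n+1) ω * S (n+1) ω
          = G n ω * S (n+1) ω + Y n ω * Real.sqrt (U n ω) := by
        rw [hGrec]; field_simp
      have hstep1 : Y (n+1) ω ^ 3 / (G (n+1) ω * S (n+1) ω)
          ≤ Y (n+1) ω ^ 3 / (Y n ω * Real.sqrt (U n ω)) := by
        apply div_le_div_of_nonneg_left (by positivity) (by positivity)
        rw [hDen]
        nlinarith [mul_nonneg hGn hSn1.le]
      have hstep2 : Y (n+1) ω ^ 3 / (Y n ω * Real.sqrt (U n ω))
          = Y n ω ^ 2 * ((1 - Real.sqrt (U n ω))^3 / Real.sqrt (U n ω)) := by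
        rw [hYrec]; field_simp
      rw [hstep2] at hstep1
      exact hstep1
  -- conclusion
  have hle : ∫ ω, (Y (n+1) ω) ^ 3 / (G (n+1) ω * S (n+1) ω) ∂μ
      ≤ ∫ ω, ∏ i ∈ sfin, X i ω ∂μ :=
    integral_mono_of_nonneg (hbound.mono fun ω h => h.1) hPint.1
      (hbound.mono fun ω h => h.2)
  rw [hPint.2, hprodval] at hle
  refine hle.trans ?_
  have hcast : (-((((n:ℕ)+1 : ℕ):ℤ) - 1)) = -(n:ℤ) := by push_cast; ring
  rw [hcast, zpow_neg, zpow_natCast]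
  have h6 : (0:ℝ) < 6 ^ n := by positivity
  have h7 : ((1:ℝ)/6)^n = ((6:ℝ)^n)⁻¹ := by rw [one_div, inv_pow]
  rw [h7]
  nlinarith [inv_nonneg.2 h6.le]
end

section
/- In the seminal-curve recursion, for every N ≥ 1 one has E[Y_N/G_N] ≤ 3^{−(N−1)}. -/
open MeasureTheory ProbabilityTheory Filter


noncomputable def scg : ℕ → ℝ → ℝ
  | 0 => fun u => (1 - Real.sqrt u) / Real.sqrt u
  | _ + 1 => fun u => 1 - Real.sqrt u

lemma scg_measurable (k : ℕ) : Measurable (scg k) := by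
  cases k with
  | zero => exact (measurable_const.sub Real.continuous_sqrt.measurable).div Real.continuous_sqrt.measurable
  | succ n => exact measurable_const.sub Real.continuous_sqrt.measurable

lemma scg_nonneg (k : ℕ) {u : ℝ} (hu : u ∈ Set.Icc (0:ℝ) 1) : 0 ≤ scg k u := by
  have h1 : Real.sqrt u ≤ 1 := by
    rw [show (1:ℝ) = Real.sqrt 1 by simp]
    exact Real.sqrt_le_sqrt hu.2
  cases k with
  | zero => exact div_nonneg (by linarith) (Real.sqrt_nonneg u)
  | succ n => show (0:ℝ) ≤ 1 - Real.sqrt u; linarith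

lemma scg_zero_eq_on : ∀ u ∈ Set.Ioc (0:ℝ) 1, scg 0 u = u ^ (-(1/2) : ℝ) - 1 := by
  intro u hu
  have h0 : 0 < u := hu.1
  have hs : 0 < Real.sqrt u := Real.sqrt_pos.2 h0
  show (1 - Real.sqrt u) / Real.sqrt u = u ^ (-(1/2) : ℝ) - 1
  rw [sub_div, div_self hs.ne']
  congr 1
  rw [Real.rpow_neg h0.le, ← Real.sqrt_eq_rpow, one_div]

lemma scg_zero_integrable :
    Integrable (scg 0) (volume.restrict (Set.Icc (0:ℝ) 1)) := by
  have h : IntegrableOn (fun u : ℝ => u ^ (-(1/2) : ℝ) - 1) (Set.Ioc 0 1) volume := by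
    have := (intervalIntegral.intervalIntegrable_rpow' (a := 0) (b := 1) (r := -(1/2)) (by norm_num)).sub
      (intervalIntegrable_const (c := (1:ℝ)))
    rwa [intervalIntegrable_iff_integrableOn_Ioc_of_le zero_le_one] at this
  have h2 : IntegrableOn (scg 0) (Set.Ioc 0 1) volume :=
    h.congr_fun (fun u hu => (scg_zero_eq_on u hu).symm) measurableSet_Ioc
  rwa [← integrableOn_Icc_iff_integrableOn_Ioc] at h2

lemma scg_succ_integrable (k : ℕ) :
    Integrable (scg (k+1)) (volume.restrict (Set.Icc (0:ℝ) 1)) := by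
  exact (continuous_const.sub Real.continuous_sqrt).integrableOn_Icc

lemma scg_zero_integral : ∫ u in Set.Icc (0:ℝ) 1, scg 0 u = 1 := by
  rw [integral_Icc_eq_integral_Ioc,
    setIntegral_congr_fun measurableSet_Ioc scg_zero_eq_on,
    ← intervalIntegral.integral_of_le zero_le_one,
    intervalIntegral.integral_sub (intervalIntegral.intervalIntegrable_rpow' (by norm_num))
      intervalIntegrable_const,
    integral_rpow (Or.inl (by norm_num))]
  rw [Real.one_rpow, Real.zero_rpow (by norm_num)]
  norm_num

lemma scg_succ_integral (k : ℕ) : ∫ u in Set.Icc (0:ℝ) 1, scg (k+1) u = 1/3 := by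
  have heq : ∀ u ∈ Set.Ioc (0:ℝ) 1, scg (k+1) u = 1 - u ^ ((1:ℝ)/2) := by
    intro u hu
    show 1 - Real.sqrt u = 1 - u ^ ((1:ℝ)/2)
    rw [Real.sqrt_eq_rpow]
  rw [integral_Icc_eq_integral_Ioc,
    setIntegral_congr_fun measurableSet_Ioc heq,
    ← intervalIntegral.integral_of_le zero_le_one,
    intervalIntegral.integral_sub intervalIntegrable_const
      (intervalIntegral.intervalIntegrable_rpow' (by norm_num)),
    integral_rpow (Or.inl (by norm_num))]
  rw [Real.one_rpow, Real.zero_rpow (by norm_num)]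
  norm_num

theorem seminal_curve_YoverG_bound
    {Ω : Type*} [MeasurableSpace Ω] (μ : Measure Ω) [IsProbabilityMeasure μ]
    -- the driving random variables: `U n`, `E n` represent the mathematical
    -- `U_{n+1}`, `E_{n+1}` (indexing shifted by one)
    (U E : ℕ → Ω → ℝ) (Γ V : Ω → ℝ) (Y S G : ℕ → Ω → ℝ)
    (hUm : ∀ n, Measurable (U n)) (hEm : ∀ n, Measurable (E n))
    (hΓm : Measurable Γ) (hVm : Measurable V)
    -- each `U n` and `V` is uniformly distributed on `[0,1]`
    (hU : ∀ n, μ.map (U n) = volume.restrict (Set.Icc (0:ℝ) 1))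
    (hV : μ.map V = volume.restrict (Set.Icc (0:ℝ) 1))
    -- each `E n` has the standard exponential distribution (rate 1)
    (hE : ∀ n, μ.map (E n) = expMeasure 1)
    -- `Γ` has the Rayleigh(√2) distribution: `P(Γ > γ) = exp (-γ²/4)` for `γ ≥ 0`
    (hΓ : ∀ γ : ℝ, 0 ≤ γ → μ {ω | Γ ω > γ} = ENNReal.ofReal (Real.exp (-(γ ^ 2) / 4)))
    -- `(U n)`, `(E n)`, `Γ`, `V` are mutually independent
    (hindep : iIndepFun
      (Sum.elim U (Sum.elim E (fun b : Bool => bif b then Γ else V))) μ)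
    -- initial conditions `S 0 = 1`, `Y 0 = (1 - V)·Γ`, `G 0 = V·Γ`
    (hS0 : ∀ ω, S 0 ω = 1)
    (hY0 : ∀ ω, Y 0 ω = (1 - V ω) * Γ ω)
    (hG0 : ∀ ω, G 0 ω = V ω * Γ ω)
    -- the seminal-curve recursion
    (hYrec : ∀ n ω, Y (n + 1) ω = Y n ω * (1 - Real.sqrt (U n ω)))
    (hSrec : ∀ n ω, 1 / S (n + 1) ω = 1 / S n ω + 4 / (Y n ω) ^ 2 * E n ω)
    (hGrec : ∀ n ω, G (n + 1) ω = G n ω + Y n ω / S (n + 1) ω * Real.sqrt (U n ω))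
    :
    ∀ N : ℕ, 1 ≤ N →
      ∫ ω, Y N ω / G N ω ∂μ ≤ (3:ℝ) ^ (-((N:ℤ) - 1)) := by
  -- notation for the driving family
  set X : ℕ ⊕ ℕ ⊕ Bool → Ω → ℝ :=
    Sum.elim U (Sum.elim E (fun b : Bool => bif b then Γ else V)) with hX
  -- composed family
  have hφm : ∀ i : ℕ ⊕ ℕ ⊕ Bool, Measurable ((Sum.elim scg (fun _ => fun _ => (1:ℝ))) i) := by
    rintro (k | j)
    · exact scg_measurable k
    · exact measurable_const
  have hcomp : iIndepFun
      (fun i => (Sum.elim scg (fun _ => fun _ => (1:ℝ))) i ∘ X i) μ :=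
    hindep.comp _ hφm
  have hXm : ∀ i, Measurable (X i) := by
    rintro (k | k | b)
    · exact hUm k
    · exact hEm k
    · cases b
      · exact hVm
      · exact hΓm
  have hcompm : ∀ i, Measurable ((fun i => (Sum.elim scg (fun _ => fun _ => (1:ℝ))) i ∘ X i) i) :=
    fun i => (hφm i).comp (hXm i)
  -- integrability and value of single factors
  have hintn : ∀ n, Integrable (fun ω => scg n (U n ω)) μ := by
    intro n
    have h : Integrable (scg n) (μ.map (U n)) := by
      rw [hU n]
      cases n with
      | zero => exact scg_zero_integrable
      | succ m => exact scg_succ_integrable m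
    exact (integrable_map_measure (scg_measurable n).aestronglyMeasurable
      (hUm n).aemeasurable).1 h
  have hvaln : ∀ n, ∫ ω, scg n (U n ω) ∂μ = ∫ u in Set.Icc (0:ℝ) 1, scg n u := by
    intro n
    rw [show (volume.restrict (Set.Icc (0:ℝ) 1)) = μ.map (U n) from (hU n).symm,
      integral_map (hUm n).aemeasurable (scg_measurable n).aestronglyMeasurable]
  -- independence of partial product and next factor
  have key : ∀ n, Integrable (fun ω => ∏ k ∈ Finset.range n, scg k (U k ω)) μ ∧
      ∫ ω, ∏ k ∈ Finset.range n, scg k (U k ω) ∂μ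
        = ∏ k ∈ Finset.range n, ∫ u in Set.Icc (0:ℝ) 1, scg k u := by
    intro n
    induction n with
    | zero => simp
    | succ n ih =>
      have heq : (∏ j ∈ (Finset.range n).map ⟨Sum.inl, Sum.inl_injective⟩,
          (fun i => (Sum.elim scg (fun _ => fun _ => (1:ℝ))) i ∘ X i) j)
          = fun ω => ∏ k ∈ Finset.range n, scg k (U k ω) := by
        funext ω
        rw [Finset.prod_apply, Finset.prod_map]
        rfl
      have hnm : (Sum.inl n : ℕ ⊕ ℕ ⊕ Bool) ∉ (Finset.range n).map ⟨Sum.inl, Sum.inl_injective⟩ := by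
        simp
      have hind : IndepFun (fun ω => ∏ k ∈ Finset.range n, scg k (U k ω))
          (fun ω => scg n (U n ω)) μ := by
        have := hcomp.indepFun_finsetProd_of_notMem hcompm hnm
        rwa [heq] at this
      constructor
      · have := hind.integrable_mul ih.1 (hintn n)
        have h2 : ((fun ω => ∏ k ∈ Finset.range n, scg k (U k ω)) * fun ω => scg n (U n ω))
            = fun ω => ∏ k ∈ Finset.range (n+1), scg k (U k ω) := by
          funext ω
          simp [Finset.prod_range_succ]
        rwa [h2] at this
      · have := hind.integral_mul_eq_mul_integral ih.1.aestronglyMeasurable (hintn n).aestronglyMeasurable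
        have h2 : ((fun ω => ∏ k ∈ Finset.range n, scg k (U k ω)) * fun ω => scg n (U n ω))
            = fun ω => ∏ k ∈ Finset.range (n+1), scg k (U k ω) := by
          funext ω
          simp [Finset.prod_range_succ]
        rw [h2] at this
        rw [this, ih.2, hvaln n, Finset.prod_range_succ]
  -- a.e. facts
  have hU01 : ∀ᵐ ω ∂μ, ∀ k, U k ω ∈ Set.Ioo (0:ℝ) 1 := by
    rw [ae_all_iff]
    intro k
    have hmeas : MeasurableSet ((Set.Ioo (0:ℝ) 1)ᶜ) := measurableSet_Ioo.compl
    refine ae_iff.mpr ?_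
    have : μ (U k ⁻¹' (Set.Ioo (0:ℝ) 1)ᶜ) = 0 := by
      rw [← Measure.map_apply (hUm k) hmeas, hU k, Measure.restrict_apply hmeas]
      have hsub : (Set.Ioo (0:ℝ) 1)ᶜ ∩ Set.Icc 0 1 ⊆ ({0, 1} : Set ℝ) := by
        rintro x ⟨hc, h0, h1⟩
        rw [Set.mem_compl_iff, Set.mem_Ioo, not_and_or, not_lt, not_lt] at hc
        simp only [Set.mem_insert_iff, Set.mem_singleton_iff]
        rcases hc with h | h
        · left; linarith
        · right; linarith
      exact measure_mono_null hsub
        (((Set.finite_singleton (1:ℝ)).insert 0).measure_zero _)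
    exact this
  have hE0 : ∀ᵐ ω ∂μ, ∀ k, 0 ≤ E k ω := by
    rw [ae_all_iff]
    intro k
    refine ae_iff.mpr ?_
    have : μ (E k ⁻¹' Set.Iio 0) = 0 := by
      rw [← Measure.map_apply (hEm k) measurableSet_Iio, hE k]
      show expMeasure 1 (Set.Iio 0) = 0
      rw [expMeasure, gammaMeasure, withDensity_apply _ measurableSet_Iio]
      exact lintegral_gammaPDF_of_nonpos le_rfl
    have hset : {ω | ¬ 0 ≤ E k ω} = E k ⁻¹' Set.Iio 0 := by
      ext ω; simp [not_le]
    rw [hset]; exact this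
  have hV01 : ∀ᵐ ω ∂μ, V ω ∈ Set.Icc (0:ℝ) 1 := by
    refine ae_iff.mpr ?_
    have hmeas : MeasurableSet ((Set.Icc (0:ℝ) 1)ᶜ) := measurableSet_Icc.compl
    have : μ (V ⁻¹' (Set.Icc (0:ℝ) 1)ᶜ) = 0 := by
      rw [← Measure.map_apply hVm hmeas, hV, Measure.restrict_apply hmeas]
      simp
    exact this
  have hΓ0 : ∀ᵐ ω ∂μ, 0 ≤ Γ ω := by
    have hs : MeasurableSet {ω | Γ ω > 0} := hΓm measurableSet_Ioi
    have h1 : μ {ω | Γ ω > 0} = 1 := by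
      rw [hΓ 0 le_rfl]; norm_num
    have h0 : μ ({ω | Γ ω > 0}ᶜ) = 0 := by
      rw [measure_compl hs (measure_ne_top μ _), h1, measure_univ, tsub_self]
    refine ae_iff.mpr (measure_mono_null (fun ω hω => ?_) h0)
    simp only [Set.mem_setOf_eq, not_le] at hω
    simp only [Set.mem_compl_iff, Set.mem_setOf_eq, not_lt]
    linarith
  -- main argument
  intro N hN
  obtain ⟨M, rfl⟩ : ∃ M, N = M + 1 := ⟨N - 1, (Nat.succ_pred_eq_of_pos hN).symm⟩
  have hle : ∀ᵐ ω ∂μ, Y (M+1) ω / G (M+1) ω ≤ ∏ k ∈ Finset.range (M+1), scg k (U k ω) := by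
    filter_upwards [hU01, hE0, hV01, hΓ0] with ω hUω hEω hVω hΓω
    have hY0nn : 0 ≤ Y 0 ω := by
      rw [hY0]; exact mul_nonneg (by linarith [hVω.2]) hΓω
    have hG0nn : 0 ≤ G 0 ω := by
      rw [hG0]; exact mul_nonneg hVω.1 hΓω
    have hsqrt : ∀ k, 0 < Real.sqrt (U k ω) ∧ Real.sqrt (U k ω) ≤ 1 := fun k =>
      ⟨Real.sqrt_pos.2 (hUω k).1, by
        rw [show (1:ℝ) = Real.sqrt 1 by simp]
        exact Real.sqrt_le_sqrt (hUω k).2.le⟩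
    have hSinv : ∀ n, 1 ≤ 1 / S n ω := by
      intro n; induction n with
      | zero => rw [hS0]; norm_num
      | succ n ih =>
        rw [hSrec]
        have h4 : 0 ≤ 4 / Y n ω ^ 2 * E n ω :=
          mul_nonneg (div_nonneg (by norm_num) (sq_nonneg _)) (hEω n)
        linarith
    have hSpos : ∀ n, 0 < S n ω ∧ S n ω ≤ 1 := by
      intro n
      have h := hSinv n
      have hne : S n ω ≠ 0 := by
        intro h0; rw [h0] at h; norm_num at h
      have hpos : 0 < S n ω := by
        rcases lt_or_gt_of_ne hne with hlt | hgt
        · exfalso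
          have : 1 / S n ω < 0 := div_neg_of_pos_of_neg one_pos hlt
          linarith
        · exact hgt
      refine ⟨hpos, ?_⟩
      have h2 := mul_le_mul_of_nonneg_left h hpos.le
      rwa [mul_one, mul_one_div, div_self hne] at h2
    have hYnn : ∀ n, 0 ≤ Y n ω := by
      intro n; induction n with
      | zero => exact hY0nn
      | succ n ih =>
        rw [hYrec]
        exact mul_nonneg ih (by linarith [(hsqrt n).2])
    have hG1 : Y 0 ω * Real.sqrt (U 0 ω) ≤ G 1 ω := by
      rw [hGrec 0]
      have hS1 := hSpos 1
      have hd : Y 0 ω ≤ Y 0 ω / S 1 ω := by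
        rw [le_div_iff₀ hS1.1]
        exact mul_le_of_le_one_right hY0nn hS1.2
      have h2 := mul_le_mul_of_nonneg_right hd (Real.sqrt_nonneg (U 0 ω))
      linarith
    have hGstep : ∀ n, G n ω ≤ G (n+1) ω := by
      intro n
      rw [hGrec]
      have h3 : 0 ≤ Y n ω / S (n+1) ω * Real.sqrt (U n ω) :=
        mul_nonneg (div_nonneg (hYnn n) (hSpos (n+1)).1.le) (Real.sqrt_nonneg _)
      linarith
    have hGN : Y 0 ω * Real.sqrt (U 0 ω) ≤ G (M+1) ω := by
      have haux : ∀ m, G 1 ω ≤ G (m+1) ω := by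
        intro m; induction m with
        | zero => exact le_rfl
        | succ m ih => exact ih.trans (hGstep (m+1))
      exact hG1.trans (haux M)
    have hYprod : ∀ n, Y n ω = Y 0 ω * ∏ k ∈ Finset.range n, (1 - Real.sqrt (U k ω)) := by
      intro n; induction n with
      | zero => simp
      | succ n ih => rw [hYrec, ih, Finset.prod_range_succ, mul_assoc]
    have hFdec : (∏ k ∈ Finset.range (M+1), scg k (U k ω))
        = (∏ k ∈ Finset.range M, (1 - Real.sqrt (U (k+1) ω))) *
          ((1 - Real.sqrt (U 0 ω)) / Real.sqrt (U 0 ω)) := by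
      rw [Finset.prod_range_succ']
      rfl
    rcases eq_or_lt_of_le hY0nn with h0 | h0
    · have hYz : Y (M+1) ω = 0 := by rw [hYprod, ← h0, zero_mul]
      rw [hYz, zero_div]
      exact Finset.prod_nonneg fun k _ => scg_nonneg k ⟨(hUω k).1.le, (hUω k).2.le⟩
    · have hbpos : 0 < Y 0 ω * Real.sqrt (U 0 ω) := mul_pos h0 (hsqrt 0).1
      have h1 : Y (M+1) ω / G (M+1) ω ≤ Y (M+1) ω / (Y 0 ω * Real.sqrt (U 0 ω)) := by
        exact div_le_div_of_nonneg_left (hYnn _) hbpos hGN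
      have h2 : Y (M+1) ω / (Y 0 ω * Real.sqrt (U 0 ω))
          = ∏ k ∈ Finset.range (M+1), scg k (U k ω) := by
        rw [hYprod, hFdec, Finset.prod_range_succ']
        have hsne : Real.sqrt (U 0 ω) ≠ 0 := (hsqrt 0).1.ne'
        field_simp
      exact h1.trans_eq h2
  -- integral values
  have hval : ∏ k ∈ Finset.range (M+1), ∫ u in Set.Icc (0:ℝ) 1, scg k u = (1/3 : ℝ)^M := by
    rw [Finset.prod_range_succ', scg_zero_integral, mul_one]
    rw [Finset.prod_congr rfl (fun k _ => scg_succ_integral k), Finset.prod_const,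
      Finset.card_range]
  have hRHS : ((3:ℝ) ^ (-(((M+1:ℕ):ℤ) - 1))) = (1/3 : ℝ)^M := by
    rw [show (-(((M+1:ℕ):ℤ) - 1)) = -(M:ℤ) by push_cast; ring]
    rw [zpow_neg, zpow_natCast, one_div, inv_pow]
  rw [hRHS]
  by_cases hint : Integrable (fun ω => Y (M+1) ω / G (M+1) ω) μ
  · have h := integral_mono_ae hint (key (M+1)).1 hle
    rw [(key (M+1)).2, hval] at h
    exact h
  · rw [integral_undef hint]
    positivity
end

section
/- Fix σ₀ ∈ ℝ and b₀ ∈ ℝ, and consider the reference line y = b₀ + σ₀·x. Parametrize a non-vertical line by (σ, x), where σ is its slope and x is the abscissa of its intersection with the reference line, so that its intercepts on the axes x = −1 and x = +1 are given by Φ(σ, x) = (b₀ + σ₀·x − σ·(1 + x), b₀ + σ₀·x + σ·(1 − x)). Then Φ restricted to the half-plane {(σ, x) : σ < σ₀} is injective with image {(y₋, y₊) : (y₊ − y₋)/2 < σ₀}, and the pushforward under this restriction of the measure with density (1/2)·(σ₀ − σ) with respect to Lebesgue measure λ₂ equals (1/4)·λ₂ restricted to that image; symmetrically, Φ restricted to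 {(σ, x) : σ > σ₀} is injective and pushes the measure with density (1/2)·(σ − σ₀) forward to (1/4)·λ₂ restricted to {(y₋, y₊) : (y₊ − y₋)/2 > σ₀}. (Equivalently: in slope/reference-intersection coordinates the improper line-process intensity ν = (1/4) dy₋ dy₊ takes the form dν = (1/2)|σ − σ₀| dσ dx.) -/
open MeasureTheory

noncomputable def Phi (σ₀ b₀ : ℝ) : ℝ × ℝ → ℝ × ℝ :=
  fun p => (b₀ + σ₀ * p.2 - p.1 * (1 + p.2), b₀ + σ₀ * p.2 + p.1 * (1 - p.2))

noncomputable def D (σ₀ : ℝ) (p : ℝ × ℝ) : ℝ × ℝ →L[ℝ] ℝ × ℝ :=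
  (((σ₀ - p.1) • ContinuousLinearMap.snd ℝ ℝ ℝ - (1 + p.2) • ContinuousLinearMap.fst ℝ ℝ ℝ).prod
    ((σ₀ - p.1) • ContinuousLinearMap.snd ℝ ℝ ℝ + (1 - p.2) • ContinuousLinearMap.fst ℝ ℝ ℝ))

lemma hasFDeriv (σ₀ b₀ : ℝ) (p : ℝ × ℝ) : HasFDerivAt (Phi σ₀ b₀) (D σ₀ p) p := by
  have h1 : HasFDerivAt (fun q : ℝ × ℝ => b₀ + σ₀ * q.2)
      ((0 : ℝ × ℝ →L[ℝ] ℝ) + σ₀ • ContinuousLinearMap.snd ℝ ℝ ℝ) p :=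
    (hasFDerivAt_const b₀ p).add ((hasFDerivAt_snd).const_mul σ₀)
  have h2 : HasFDerivAt (fun q : ℝ × ℝ => q.1 * (1 + q.2))
      (p.1 • ((0 : ℝ × ℝ →L[ℝ] ℝ) + ContinuousLinearMap.snd ℝ ℝ ℝ) +
        (1 + p.2) • ContinuousLinearMap.fst ℝ ℝ ℝ) p :=
    (hasFDerivAt_fst).mul ((hasFDerivAt_const (1:ℝ) p).add hasFDerivAt_snd)
  have h3 : HasFDerivAt (fun q : ℝ × ℝ => q.1 * (1 - q.2))
      (p.1 • ((0 : ℝ × ℝ →L[ℝ] ℝ) - ContinuousLinearMap.snd ℝ ℝ ℝ) +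
        (1 - p.2) • ContinuousLinearMap.fst ℝ ℝ ℝ) p :=
    (hasFDerivAt_fst).mul ((hasFDerivAt_const (1:ℝ) p).sub hasFDerivAt_snd)
  have := ((h1.sub h2).prodMk (h1.add h3))
  refine HasFDerivAt.congr_fderiv this ?_
  ext ⟨u, v⟩ <;>
    simp [D, ContinuousLinearMap.prod_apply] <;> ring

lemma det_D (σ₀ : ℝ) (p : ℝ × ℝ) : (D σ₀ p).det = -(2 * (σ₀ - p.1)) := by
  have : (D σ₀ p).det = LinearMap.det ((D σ₀ p) : ℝ × ℝ →ₗ[ℝ] ℝ × ℝ) := rfl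
  rw [this, ← LinearMap.det_toMatrix (Module.Basis.finTwoProd ℝ), Matrix.det_fin_two]
  simp [LinearMap.toMatrix_apply, D, Module.Basis.coe_finTwoProd_repr]
  ring

lemma injOn (σ₀ b₀ : ℝ) {s : Set (ℝ × ℝ)} (hne : ∀ p ∈ s, p.1 ≠ σ₀) :
    Set.InjOn (Phi σ₀ b₀) s := by
  rintro ⟨a, b⟩ hab ⟨c, d⟩ hcd h
  simp only [Phi, Prod.mk.injEq] at h
  obtain ⟨h1, h2⟩ := h
  have hac : a = c := by nlinarith
  subst hac
  have hb : (σ₀ - a) * b = (σ₀ - a) * d := by nlinarith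
  have hane : σ₀ - a ≠ 0 := sub_ne_zero.2 (Ne.symm (hne _ hab))
  have := mul_left_cancel₀ hane hb
  simp [this]

lemma image_mem (σ₀ b₀ : ℝ) (q : ℝ × ℝ) (h : (q.2 - q.1) / 2 ≠ σ₀) :
    Phi σ₀ b₀ ((q.2 - q.1) / 2, ((q.1 + q.2) / 2 - b₀) / (σ₀ - (q.2 - q.1) / 2)) = q := by
  have hne : σ₀ - (q.2 - q.1) / 2 ≠ 0 := sub_ne_zero.2 (Ne.symm h)
  obtain ⟨u, v⟩ := q
  simp only [Phi, Prod.mk.injEq]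
  simp only at hne
  have hx : (σ₀ - (v - u) / 2) * (((u + v) / 2 - b₀) / (σ₀ - (v - u) / 2))
      = (u + v) / 2 - b₀ := mul_div_cancel₀ _ hne
  constructor <;> linear_combination hx

lemma image_lt (σ₀ b₀ : ℝ) :
    Phi σ₀ b₀ '' {p : ℝ × ℝ | p.1 < σ₀} = {q : ℝ × ℝ | (q.2 - q.1) / 2 < σ₀} := by
  ext q
  simp only [Set.mem_image, Set.mem_setOf_eq]
  constructor
  · rintro ⟨⟨a, b⟩, ha, rfl⟩
    simp only [Phi, Set.mem_setOf_eq] at *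
    ring_nf
    linarith
  · intro h
    exact ⟨_, by simpa using h, image_mem σ₀ b₀ q (ne_of_lt h)⟩

lemma image_gt (σ₀ b₀ : ℝ) :
    Phi σ₀ b₀ '' {p : ℝ × ℝ | σ₀ < p.1} = {q : ℝ × ℝ | σ₀ < (q.2 - q.1) / 2} := by
  ext q
  simp only [Set.mem_image, Set.mem_setOf_eq]
  constructor
  · rintro ⟨⟨a, b⟩, ha, rfl⟩
    simp only [Phi, Set.mem_setOf_eq] at *
    ring_nf
    linarith
  · intro h
    exact ⟨_, by simpa using h, image_mem σ₀ b₀ q (ne_of_gt h)⟩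

lemma meas_Phi (σ₀ b₀ : ℝ) : Measurable (Phi σ₀ b₀) := by
  unfold Phi; fun_prop

lemma half (σ₀ b₀ : ℝ) {s : Set (ℝ × ℝ)} (hs : MeasurableSet s)
    (hne : ∀ p ∈ s, p.1 ≠ σ₀) :
    Measure.map (Phi σ₀ b₀) ((volume.restrict s).withDensity
        (fun p => ENNReal.ofReal (2 * |σ₀ - p.1|)))
      = volume.restrict (Phi σ₀ b₀ '' s) := by
  have := map_withDensity_abs_det_fderiv_eq_addHaar (volume : Measure (ℝ × ℝ)) hs.nullMeasurableSet
    (fun p _ => (hasFDeriv σ₀ b₀ p).hasFDerivWithinAt) (injOn σ₀ b₀ hne)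
  have hfun : ∀ p : ℝ × ℝ, ENNReal.ofReal (2 * |σ₀ - p.1|) = ENNReal.ofReal |(D σ₀ p).det| := by
    intro p
    rw [det_D, abs_neg, abs_mul]
    norm_num
  simp_rw [hfun]
  exact this

lemma push_lt (σ₀ b₀ : ℝ) :
    Measure.map (Phi σ₀ b₀)
        (((volume : Measure (ℝ × ℝ)).withDensity
            (fun p => ENNReal.ofReal (1 / 2 * (σ₀ - p.1)))).restrict
          {p : ℝ × ℝ | p.1 < σ₀})
      = ENNReal.ofReal (1 / 4) •
          (volume : Measure (ℝ × ℝ)).restrict {q : ℝ × ℝ | (q.2 - q.1) / 2 < σ₀} := by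
  have hs : MeasurableSet {p : ℝ × ℝ | p.1 < σ₀} :=
    measurableSet_lt measurable_fst measurable_const
  rw [restrict_withDensity hs]
  have hae : (fun p : ℝ × ℝ => ENNReal.ofReal (1 / 2 * (σ₀ - p.1)))
      =ᵐ[volume.restrict {p : ℝ × ℝ | p.1 < σ₀}]
      (ENNReal.ofReal (1 / 4) • fun p : ℝ × ℝ => ENNReal.ofReal (2 * |σ₀ - p.1|)) := by
    filter_upwards [ae_restrict_mem hs] with p hp
    have h1 : (0:ℝ) < σ₀ - p.1 := sub_pos.2 hp
    simp only [Pi.smul_apply, smul_eq_mul]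
    rw [abs_of_pos h1, ← ENNReal.ofReal_mul (by norm_num)]
    ring_nf
  rw [withDensity_congr_ae hae,
    withDensity_smul _ (by fun_prop : Measurable fun p : ℝ × ℝ => ENNReal.ofReal (2 * |σ₀ - p.1|)),
    Measure.map_smul, half σ₀ b₀ hs (fun p hp => ne_of_lt hp), image_lt]

lemma push_gt (σ₀ b₀ : ℝ) :
    Measure.map (Phi σ₀ b₀)
        (((volume : Measure (ℝ × ℝ)).withDensity
            (fun p => ENNReal.ofReal (1 / 2 * (p.1 - σ₀)))).restrict
          {p : ℝ × ℝ | σ₀ < p.1})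
      = ENNReal.ofReal (1 / 4) •
          (volume : Measure (ℝ × ℝ)).restrict {q : ℝ × ℝ | σ₀ < (q.2 - q.1) / 2} := by
  have hs : MeasurableSet {p : ℝ × ℝ | σ₀ < p.1} :=
    measurableSet_lt measurable_const measurable_fst
  rw [restrict_withDensity hs]
  have hae : (fun p : ℝ × ℝ => ENNReal.ofReal (1 / 2 * (p.1 - σ₀)))
      =ᵐ[volume.restrict {p : ℝ × ℝ | σ₀ < p.1}]
      (ENNReal.ofReal (1 / 4) • fun p : ℝ × ℝ => ENNReal.ofReal (2 * |σ₀ - p.1|)) := by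
    filter_upwards [ae_restrict_mem hs] with p hp
    have h1 : σ₀ - p.1 < 0 := sub_neg.2 hp
    simp only [Pi.smul_apply, smul_eq_mul]
    rw [abs_of_neg h1, ← ENNReal.ofReal_mul (by norm_num)]
    ring_nf
  rw [withDensity_congr_ae hae,
    withDensity_smul _ (by fun_prop : Measurable fun p : ℝ × ℝ => ENNReal.ofReal (2 * |σ₀ - p.1|)),
    Measure.map_smul, half σ₀ b₀ hs (fun p hp => ne_of_gt hp), image_gt]

/-- Change of line coordinates to slope/reference-intersection coordinates `(σ, x)`
relative to the reference line `y = b₀ + σ₀·x`:  the map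
`Φ (σ, x) = (b₀ + σ₀·x - σ·(1 + x), b₀ + σ₀·x + σ·(1 - x))` sends `(σ, x)` to the
intercepts `(y₋, y₊)` of the corresponding line on the axes `x = -1`, `x = +1`.
On `{σ < σ₀}` it is injective with image `{(y₋, y₊) : (y₊ - y₋)/2 < σ₀}` and pushes
the measure with density `(1/2)·(σ₀ - σ)` forward to `(1/4)·λ₂` on the image; on
`{σ > σ₀}` it is injective and pushes the measure with density `(1/2)·(σ - σ₀)`
forward to `(1/4)·λ₂` on `{(y₋, y₊) : (y₊ - y₋)/2 > σ₀}`.  Equivalently, in these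
coordinates the intensity `ν = (1/4) dy₋ dy₊` takes the form
`dν = (1/2)·|σ - σ₀| dσ dx`. -/
theorem improper_intensity_slope_coords (σ₀ b₀ : ℝ) :
    Set.InjOn
        (fun p : ℝ × ℝ =>
          (b₀ + σ₀ * p.2 - p.1 * (1 + p.2), b₀ + σ₀ * p.2 + p.1 * (1 - p.2)))
        {p : ℝ × ℝ | p.1 < σ₀}
    ∧ (fun p : ℝ × ℝ =>
          (b₀ + σ₀ * p.2 - p.1 * (1 + p.2), b₀ + σ₀ * p.2 + p.1 * (1 - p.2))) ''
        {p : ℝ × ℝ | p.1 < σ₀} = {q : ℝ × ℝ | (q.2 - q.1) / 2 < σ₀}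
    ∧ Measure.map
        (fun p : ℝ × ℝ =>
          (b₀ + σ₀ * p.2 - p.1 * (1 + p.2), b₀ + σ₀ * p.2 + p.1 * (1 - p.2)))
        (((volume : Measure (ℝ × ℝ)).withDensity
            (fun p => ENNReal.ofReal (1 / 2 * (σ₀ - p.1)))).restrict
          {p : ℝ × ℝ | p.1 < σ₀})
      = ENNReal.ofReal (1 / 4) •
          (volume : Measure (ℝ × ℝ)).restrict {q : ℝ × ℝ | (q.2 - q.1) / 2 < σ₀}
    ∧ Set.InjOn
        (fun p : ℝ × ℝ =>
          (b₀ + σ₀ * p.2 - p.1 * (1 + p.2), b₀ + σ₀ * p.2 + p.1 * (1 - p.2)))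
        {p : ℝ × ℝ | σ₀ < p.1}
    ∧ (fun p : ℝ × ℝ =>
          (b₀ + σ₀ * p.2 - p.1 * (1 + p.2), b₀ + σ₀ * p.2 + p.1 * (1 - p.2))) ''
        {p : ℝ × ℝ | σ₀ < p.1} = {q : ℝ × ℝ | σ₀ < (q.2 - q.1) / 2}
    ∧ Measure.map
        (fun p : ℝ × ℝ =>
          (b₀ + σ₀ * p.2 - p.1 * (1 + p.2), b₀ + σ₀ * p.2 + p.1 * (1 - p.2)))
        (((volume : Measure (ℝ × ℝ)).withDensity
            (fun p => ENNReal.ofReal (1 / 2 * (p.1 - σ₀)))).restrict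
          {p : ℝ × ℝ | σ₀ < p.1})
      = ENNReal.ofReal (1 / 4) •
          (volume : Measure (ℝ × ℝ)).restrict {q : ℝ × ℝ | σ₀ < (q.2 - q.1) / 2} :=
  ⟨injOn σ₀ b₀ (fun p hp => ne_of_lt hp), image_lt σ₀ b₀, push_lt σ₀ b₀,
   injOn σ₀ b₀ (fun p hp => ne_of_gt hp), image_gt σ₀ b₀, push_gt σ₀ b₀⟩
end
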